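/- Let φ ∈ Σ_r ⊗ Δ_n be a partially pure spinor, let u ∈ Spin^{c,r}(n), and write λ(u) = (g₁, g₂, z) ∈ SO(n) × SO(r) × U(1). Then u·φ is a partially pure spinor, V^{u·φ} = g₁(V^φ), and J^{u·φ} = g₁ ∘ J^φ ∘ g₁^{−1} as a map on V^{u·φ}. -/

import Mathlib

open Complex Matrix
noncomputable section
abbrev Rn (n : ℕ) := EuclideanSpace ℝ (Fin n)
abbrev SpIdx (n : ℕ) : Type := Fin (n / 2) → Fin 2
abbrev Spinor (n : ℕ) := EuclideanSpace ℂ (SpIdx n)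
abbrev TwSpinor (r n : ℕ) := EuclideanSpace ℂ (SpIdx r × SpIdx n)

def g1M : Matrix (Fin 2) (Fin 2) ℂ := !![I, 0; 0, -I]
def g2M : Matrix (Fin 2) (Fin 2) ℂ := !![0, I; I, 0]
def TM : Matrix (Fin 2) (Fin 2) ℂ := !![0, -I; I, 0]

def tensorOp {k : ℕ} (M : Fin k → Matrix (Fin 2) (Fin 2) ℂ) :
    Matrix (Fin k → Fin 2) (Fin k → Fin 2) ℂ :=
  Matrix.of fun x y => ∏ t, M t (x t) (y t)

def genMat (n : ℕ) (i : ℕ) : Matrix (SpIdx n) (SpIdx n) ℂ :=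
  if i < 2 * (n / 2) then
    tensorOp (fun t =>
      if (t : ℕ) < n / 2 - 1 - i / 2 then 1
      else if (t : ℕ) = n / 2 - 1 - i / 2 then (if i % 2 = 0 then g1M else g2M)
      else TM)
  else I • tensorOp (fun _ => TM)

def vecMat (n : ℕ) (X : Rn n) : Matrix (SpIdx n) (SpIdx n) ℂ :=
  ∑ i : Fin n, (X i : ℂ) • genMat n (i : ℕ)

def volMat (n : ℕ) : Matrix (SpIdx n) (SpIdx n) ℂ :=
  ((List.range n).map (genMat n)).prod

def actN {r n : ℕ} (M : Matrix (SpIdx n) (SpIdx n) ℂ) (φ : TwSpinor r n) : TwSpinor r n :=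
  WithLp.toLp 2 (fun p : SpIdx r × SpIdx n => ∑ b, M p.2 b * φ (p.1, b))

def actR {r n : ℕ} (M : Matrix (SpIdx r) (SpIdx r) ℂ) (φ : TwSpinor r n) : TwSpinor r n :=
  WithLp.toLp 2 (fun p : SpIdx r × SpIdx n => ∑ a, M p.1 a * φ (a, p.2))

def wedgeMat (n : ℕ) (X Y : Rn n) : Matrix (SpIdx n) (SpIdx n) ℂ :=
  vecMat n X * vecMat n Y + (((inner ℝ X Y : ℝ) : ℂ)) • 1

def etaM (r n : ℕ) (M : Matrix (SpIdx r) (SpIdx r) ℂ) (φ : TwSpinor r n) (X Y : Rn n) : ℝ :=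
  ((inner ℂ (actN (wedgeMat n X Y) (actR M φ)) φ : ℂ)).re

def eta (r n : ℕ) (φ : TwSpinor r n) (k l : ℕ) (X Y : Rn n) : ℝ :=
  etaM r n (genMat r k * genMat r l) φ X Y

def stdBasis (n : ℕ) (i : Fin n) : Rn n := EuclideanSpace.single i 1

def etaActionM (r n : ℕ) (M : Matrix (SpIdx r) (SpIdx r) ℂ) (φ : TwSpinor r n) : TwSpinor r n :=
  ∑ i : Fin n, ∑ j : Fin n,
    if i < j then
      ((etaM r n M φ (stdBasis n i) (stdBasis n j) : ℝ) : ℂ) • actN (genMat n (i:ℕ) * genMat n (j:ℕ)) φ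
    else 0

def InSigma (r n : ℕ) (φ : TwSpinor r n) : Prop :=
  r % 2 = 1 ∨ actR (((-I) ^ (r / 2)) • volMat r) φ = φ

structure IsPartiallyPure (r n : ℕ) (φ : TwSpinor r n) (V : Submodule ℝ (Rn n)) : Prop where
  lt_dim : r < n
  mem_sigma : InSigma r n φ
  unit_norm : ‖φ‖ = 1
  dim_eq : Module.finrank ℝ V = n - r
  exists_conj : ∀ X ∈ V, ∃ Y ∈ V, actN (vecMat n X) φ = I • actN (vecMat n Y) φ
  eta_plus : ∀ k l : Fin r, k < l →
    etaActionM r n (genMat r (k : ℕ) * genMat r (l : ℕ)) φ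
      + actR (genMat r (k : ℕ) * genMat r (l : ℕ)) φ = 0
  f_orth : ∀ k l : Fin r, k < l →
    (inner ℂ (actR (genMat r (k : ℕ) * genMat r (l : ℕ)) φ) φ : ℂ) = 0
  vol_orth : r = 4 → (inner ℂ (actR (volMat r) φ) φ : ℂ) = 0
-- real matrix applied to a Euclidean vector
def mvE {n : ℕ} (M : Matrix (Fin n) (Fin n) ℝ) (x : Rn n) : Rn n := WithLp.toLp 2 (fun i => ∑ j, M i j * x j)

def etaHatMat (r n : ℕ) (φ : TwSpinor r n) (k l : ℕ) : Matrix (Fin n) (Fin n) ℝ :=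
  Matrix.of fun i j => eta r n φ k l (stdBasis n j) (stdBasis n i)

def etaHatExt (r n : ℕ) (φ : TwSpinor r n) (k l : Fin r) : Matrix (Fin n) (Fin n) ℝ :=
  if k = l then 0 else if k < l then etaHatMat r n φ (k : ℕ) (l : ℕ)
  else -(etaHatMat r n φ (l : ℕ) (k : ℕ))

def etaPhi (r n : ℕ) (φ : TwSpinor r n) (C : Matrix (Fin r) (Fin r) ℝ) :
    Matrix (Fin n) (Fin n) ℝ :=
  ∑ k : Fin r, ∑ l : Fin r, if k < l then C k l • etaHatMat r n φ (k : ℕ) (l : ℕ) else 0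

def IsEtaFrame (r n : ℕ) (φ : TwSpinor r n) (V : Submodule ℝ (Rn n)) (v : Fin r → Rn n) : Prop :=
  Orthonormal ℝ v ∧ (∀ k, v k ∈ Vᗮ) ∧
    ∀ k l : Fin r, k < l → ∀ X Y : Rn n,
      eta r n φ (k : ℕ) (l : ℕ) X Y
        = (inner ℝ (v k) X : ℝ) * (inner ℝ (v l) Y : ℝ) - (inner ℝ (v l) X : ℝ) * (inner ℝ (v k) Y : ℝ)

def IsJ (r n : ℕ) (φ : TwSpinor r n) (V : Submodule ℝ (Rn n)) (J : Rn n → Rn n) : Prop :=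
  (∀ X ∈ V, J X ∈ V) ∧ ∀ X ∈ V, actN (vecMat n X) φ = I • actN (vecMat n (J X)) φ

def Fop (r n : ℕ) (φ : TwSpinor r n) : TwSpinor r n :=
  ((-I) ^ (n / 2) * I ^ (r / 2)) • actN (volMat n) (actR (volMat r) φ)

def tripleFrame (m r : ℕ) (v vJ : Fin m → Rn (2*m+r)) (w : Fin r → Rn (2*m+r)) :
    Fin (2*m+r) → Rn (2*m+r) :=
  fun i => if h : (i : ℕ) < 2*m then
      (if (i : ℕ) % 2 = 0 then v ⟨(i:ℕ)/2, by omega⟩ else vJ ⟨(i:ℕ)/2, by omega⟩)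
    else w ⟨(i:ℕ) - 2*m, by have := i.isLt; omega⟩

def frameDet (n : ℕ) (u : Fin n → Rn n) : ℝ := (Matrix.of fun i j => u i j).det

def TripleSign (m r : ℕ) (φ : TwSpinor r (2*m+r)) (V : Submodule ℝ (Rn (2*m+r)))
    (J : Rn (2*m+r) → Rn (2*m+r)) (c : ℝ) : Prop :=
  ∃ (v : Fin m → Rn (2*m+r)) (w : Fin r → Rn (2*m+r)),
    (∀ j, v j ∈ V) ∧ IsEtaFrame r (2*m+r) φ V w ∧
    Orthonormal ℝ (tripleFrame m r v (fun j => J (v j)) w) ∧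
    frameDet (2*m+r) (tripleFrame m r v (fun j => J (v j)) w) = c

def IsCompatTriple (m r : ℕ) (V : Submodule ℝ (Rn (2*m+r)))
    (J : Rn (2*m+r) → Rn (2*m+r)) (w : Fin r → Rn (2*m+r)) : Prop :=
  Module.finrank ℝ V = 2*m ∧ (∀ x ∈ V, J x ∈ V) ∧ (∀ x ∈ V, J (J x) = -x) ∧
  (∀ x ∈ V, ∀ y ∈ V, (inner ℝ (J x) (J y) : ℝ) = (inner ℝ x y : ℝ)) ∧
  Orthonormal ℝ w ∧ (∀ k, w k ∈ Vᗮ)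

def IsPosTriple (m r : ℕ) (V : Submodule ℝ (Rn (2*m+r)))
    (J : Rn (2*m+r) → Rn (2*m+r)) (w : Fin r → Rn (2*m+r)) : Prop :=
  IsCompatTriple m r V J w ∧ ∃ v : Fin m → Rn (2*m+r), (∀ j, v j ∈ V) ∧
    Orthonormal ℝ (tripleFrame m r v (fun j => J (v j)) w) ∧
    frameDet (2*m+r) (tripleFrame m r v (fun j => J (v j)) w) = 1

def SpinMat (n : ℕ) : Set (Matrix (SpIdx n) (SpIdx n) ℂ) :=
  {M | ∃ L : List (Rn n), L.length % 2 = 0 ∧ (∀ x ∈ L, ‖x‖ = 1) ∧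
        M = (L.map (vecMat n)).prod}

def kronOp {r n : ℕ} (h : Matrix (SpIdx r) (SpIdx r) ℂ) (g : Matrix (SpIdx n) (SpIdx n) ℂ) :
    Matrix (SpIdx r × SpIdx n) (SpIdx r × SpIdx n) ℂ :=
  Matrix.of fun p q => h p.1 q.1 * g p.2 q.2

def SpinCR (r n : ℕ) : Set (Matrix (SpIdx r × SpIdx n) (SpIdx r × SpIdx n) ℂ) :=
  {U | ∃ g ∈ SpinMat n, ∃ h ∈ SpinMat r, ∃ z : ℂ, ‖z‖ = 1 ∧ U = z • kronOp h g}

def SpinCsub (r n : ℕ) : Set (Matrix (SpIdx r × SpIdx n) (SpIdx r × SpIdx n) ℂ) :=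
  {U | ∃ h ∈ SpinMat r, ∃ z : ℂ, ‖z‖ = 1 ∧ U = z • kronOp h 1}

def twAct {r n : ℕ} (U : Matrix (SpIdx r × SpIdx n) (SpIdx r × SpIdx n) ℂ)
    (φ : TwSpinor r n) : TwSpinor r n :=
  WithLp.toLp 2 (fun p : SpIdx r × SpIdx n => ∑ q, U p q * φ q)

def SOset (r : ℕ) : Set (Matrix (Fin r) (Fin r) ℝ) := {B | B * Bᵀ = 1 ∧ B.det = 1}

def SOg (r : ℕ) : Subgroup (Matrix.orthogonalGroup (Fin r) ℝ) :=
  MonoidHom.ker (Matrix.detMonoidHom.comp (Matrix.orthogonalGroup (Fin r) ℝ).subtype)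

def soMat {r : ℕ} (B : ↥(SOg r)) : Matrix (Fin r) (Fin r) ℝ := ((B : Matrix.orthogonalGroup (Fin r) ℝ) : Matrix (Fin r) (Fin r) ℝ)

def toCvec (m r : ℕ) (x : Rn (2*m+r)) : Fin m → ℂ :=
  fun j => (x ⟨2*(j:ℕ), by have := j.isLt; omega⟩ : ℝ) + (x ⟨2*(j:ℕ)+1, by have := j.isLt; omega⟩ : ℝ) * I

def blockMap (m r : ℕ) (A : Matrix (Fin m) (Fin m) ℂ) (B : Matrix (Fin r) (Fin r) ℝ) :
    Rn (2*m+r) → Rn (2*m+r) :=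
  fun x => WithLp.toLp 2 (fun i : Fin (2*m+r) =>
    if h : (i : ℕ) < 2*m then
      (if (i : ℕ) % 2 = 0 then (A.mulVec (toCvec m r x) ⟨(i:ℕ)/2, by omega⟩).re
       else (A.mulVec (toCvec m r x) ⟨(i:ℕ)/2, by omega⟩).im)
    else ∑ k : Fin r, B ⟨(i:ℕ) - 2*m, by have := i.isLt; omega⟩ k
            * x ⟨2*m + (k:ℕ), by have := k.isLt; omega⟩)

-- ===== Chunk 1: 2x2 matrices, tensorOp, genMat =====
section TwoByTwo

lemma g1M_mul_g1M : g1M * g1M = -1 := by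
  ext i j; fin_cases i <;> fin_cases j <;>
    simp [g1M, Matrix.mul_apply, Fin.sum_univ_two, Matrix.one_apply]

lemma g2M_mul_g2M : g2M * g2M = -1 := by
  ext i j; fin_cases i <;> fin_cases j <;>
    simp [g2M, Matrix.mul_apply, Fin.sum_univ_two, Matrix.one_apply]

lemma TM_mul_TM : TM * TM = 1 := by
  ext i j; fin_cases i <;> fin_cases j <;>
    simp [TM, Matrix.mul_apply, Fin.sum_univ_two, Matrix.one_apply]

lemma g1M_anticomm_g2M : g1M * g2M = -(g2M * g1M) := by
  ext i j; fin_cases i <;> fin_cases j <;>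
    simp [g1M, g2M, Matrix.mul_apply, Fin.sum_univ_two]

lemma g1M_anticomm_TM : g1M * TM = -(TM * g1M) := by
  ext i j; fin_cases i <;> fin_cases j <;>
    simp [g1M, TM, Matrix.mul_apply, Fin.sum_univ_two]

lemma g2M_anticomm_TM : g2M * TM = -(TM * g2M) := by
  ext i j; fin_cases i <;> fin_cases j <;>
    simp [g2M, TM, Matrix.mul_apply, Fin.sum_univ_two]

lemma g1M_ct : g1Mᴴ = -g1M := by
  ext i j; fin_cases i <;> fin_cases j <;> simp [g1M, Matrix.conjTranspose_apply]

lemma g2M_ct : g2Mᴴ = -g2M := by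
  ext i j; fin_cases i <;> fin_cases j <;> simp [g2M, Matrix.conjTranspose_apply]

lemma TM_ct : TMᴴ = TM := by
  ext i j; fin_cases i <;> fin_cases j <;> simp [TM, Matrix.conjTranspose_apply]

end TwoByTwo

section TensorOp

variable {k : ℕ}

lemma tensorOp_mul (M N : Fin k → Matrix (Fin 2) (Fin 2) ℂ) :
    tensorOp M * tensorOp N = tensorOp (fun t => M t * N t) := by
  ext x y
  simp only [tensorOp, Matrix.mul_apply, Matrix.of_apply]
  rw [Finset.prod_univ_sum]
  simp [Matrix.mul_apply, ← Finset.prod_mul_distrib]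

lemma tensorOp_one : tensorOp (fun _ : Fin k => (1 : Matrix (Fin 2) (Fin 2) ℂ)) = 1 := by
  ext x y
  simp only [tensorOp, Matrix.of_apply, Matrix.one_apply]
  by_cases h : x = y
  · subst h; simp
  · rw [if_neg h]
    obtain ⟨t, ht⟩ : ∃ t, x t ≠ y t := by
      by_contra hc; push_neg at hc; exact h (funext hc)
    exact Finset.prod_eq_zero (Finset.mem_univ t) (by simp [Matrix.one_apply, ht])

lemma tensorOp_ct (M : Fin k → Matrix (Fin 2) (Fin 2) ℂ) :
    (tensorOp M)ᴴ = tensorOp (fun t => (M t)ᴴ) := by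
  ext x y
  simp [tensorOp, Matrix.conjTranspose_apply, map_prod]

lemma tensorOp_neg_slot {M N : Fin k → Matrix (Fin 2) (Fin 2) ℂ} (t₀ : Fin k)
    (h0 : M t₀ = -N t₀) (h : ∀ t, t ≠ t₀ → M t = N t) :
    tensorOp M = -tensorOp N := by
  ext x y
  simp only [tensorOp, Matrix.neg_apply, Matrix.of_apply]
  rw [← Finset.mul_prod_erase Finset.univ _ (Finset.mem_univ t₀),
      ← Finset.mul_prod_erase Finset.univ (fun t => N t (x t) (y t)) (Finset.mem_univ t₀)]
  rw [h0]
  have : ∀ t ∈ Finset.univ.erase t₀, M t (x t) (y t) = N t (x t) (y t) := by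
    intro t ht
    rw [h t (Finset.mem_erase.mp ht).1]
  rw [Finset.prod_congr rfl this, Matrix.neg_apply, neg_mul]

lemma tensorOp_eq_one_slotwise {M : Fin k → Matrix (Fin 2) (Fin 2) ℂ}
    (h : ∀ t, M t = 1) : tensorOp M = 1 := by
  have : M = fun _ => 1 := funext h
  rw [this, tensorOp_one]

end TensorOp
-- ===== Chunk 2: genMat relations =====
section GenMat

lemma slot_anticomm {k : ℕ} (M N : Fin k → Matrix (Fin 2) (Fin 2) ℂ) (t₀ : Fin k)
    (h0 : M t₀ * N t₀ = -(N t₀ * M t₀)) (h : ∀ t, t ≠ t₀ → M t * N t = N t * M t) :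
    tensorOp M * tensorOp N = -(tensorOp N * tensorOp M) := by
  rw [tensorOp_mul, tensorOp_mul]
  exact tensorOp_neg_slot t₀ h0 (fun t ht => h t ht)

lemma genG_anticomm_TM (i : ℕ) :
    (if i % 2 = 0 then g1M else g2M) * TM = -(TM * (if i % 2 = 0 then g1M else g2M)) := by
  by_cases h : i % 2 = 0 <;> simp [h, g1M_anticomm_TM, g2M_anticomm_TM]

lemma genG_sq (i : ℕ) :
    (if i % 2 = 0 then g1M else g2M) * (if i % 2 = 0 then g1M else g2M) = -1 := by
  by_cases h : i % 2 = 0 <;> simp [h, g1M_mul_g1M, g2M_mul_g2M]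

lemma genG_ct (i : ℕ) :
    (if i % 2 = 0 then g1M else g2M)ᴴ = -(if i % 2 = 0 then g1M else g2M) := by
  by_cases h : i % 2 = 0 <;> simp [h, g1M_ct, g2M_ct]

-- anticommutation, case both even-type, i/2 < j/2
lemma genMat_anticomm_aux {n i j : ℕ} (hi : i < 2 * (n / 2)) (hj : j < 2 * (n / 2))
    (hij : i / 2 < j / 2) :
    genMat n i * genMat n j = -(genMat n j * genMat n i) := by
  have hk : 0 < n / 2 := by omega
  unfold genMat
  rw [if_pos hi, if_pos hj]
  apply slot_anticomm _ _ ⟨n / 2 - 1 - i / 2, by omega⟩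
  · have h1 : ¬ ((n / 2 - 1 - i / 2 : ℕ) < n / 2 - 1 - i / 2) := by omega
    have h2 : ¬ ((n / 2 - 1 - i / 2 : ℕ) < n / 2 - 1 - j / 2) := by omega
    have h3 : ¬ ((n / 2 - 1 - i / 2 : ℕ) = n / 2 - 1 - j / 2) := by omega
    simp only [Fin.val_mk, h1, h2, h3, eq_self_iff_true, if_true, if_false]
    exact genG_anticomm_TM i
  · intro t ht
    have htv : (t : ℕ) ≠ n / 2 - 1 - i / 2 := fun hc => ht (Fin.ext hc)
    rcases lt_trichotomy (t : ℕ) (n / 2 - 1 - j / 2) with h | h | h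
    · have h1 : (t : ℕ) < n / 2 - 1 - i / 2 := by omega
      simp [h, h1]
    · have h1 : (t : ℕ) < n / 2 - 1 - i / 2 := by omega
      have h4 : (n / 2 - 1 - j / 2 : ℕ) < n / 2 - 1 - i / 2 := by omega
      simp [h, h1, h4]
    · have h1 : ¬ ((t : ℕ) < n / 2 - 1 - j / 2) := by omega
      have h2 : ¬ ((t : ℕ) = n / 2 - 1 - j / 2) := by omega
      rcases lt_trichotomy (t : ℕ) (n / 2 - 1 - i / 2) with g | g | g
      · simp [h1, h2, g]
      · exact absurd g htv
      · have g1 : ¬ ((t : ℕ) < n / 2 - 1 - i / 2) := by omega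
        have g2 : ¬ ((t : ℕ) = n / 2 - 1 - i / 2) := by omega
        simp [h1, h2, g1, g2]

-- case same pair, i = 2m, j = 2m+1 type
lemma genMat_anticomm_pair {n i j : ℕ} (hi : i < 2 * (n / 2)) (hj : j < 2 * (n / 2))
    (hp : i / 2 = j / 2) (hij : i ≠ j) :
    genMat n i * genMat n j = -(genMat n j * genMat n i) := by
  have hk : 0 < n / 2 := by omega
  have hm : i % 2 ≠ j % 2 := by omega
  unfold genMat
  rw [if_pos hi, if_pos hj]
  apply slot_anticomm _ _ ⟨n / 2 - 1 - i / 2, by omega⟩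
  · have h1 : ¬ ((n / 2 - 1 - i / 2 : ℕ) < n / 2 - 1 - i / 2) := by omega
    simp only [Fin.val_mk, ← hp, h1, eq_self_iff_true, if_true, if_false]
    rcases Nat.mod_two_eq_zero_or_one i with h2 | h2
    · have h3 : ¬ (j % 2 = 0) := by omega
      simp [h2, h3, g1M_anticomm_g2M]
    · have h3 : j % 2 = 0 := by omega
      have h2' : ¬ (i % 2 = 0) := by omega
      simp [h2', h3]
      rw [g1M_anticomm_g2M, neg_neg]
  · intro t ht
    have htv : (t : ℕ) ≠ n / 2 - 1 - i / 2 := fun hc => ht (Fin.ext hc)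
    rcases lt_trichotomy (t : ℕ) (n / 2 - 1 - i / 2) with h | h | h
    · simp [← hp, h]
    · exact absurd h htv
    · have h1 : ¬ ((t : ℕ) < n / 2 - 1 - i / 2) := by omega
      have h2 : ¬ ((t : ℕ) = n / 2 - 1 - i / 2) := by omega
      simp [← hp, h1, h2]

-- case j is the odd top generator
lemma genMat_anticomm_top {n i j : ℕ} (hi : i < 2 * (n / 2)) (hj1 : ¬ j < 2 * (n / 2)) :
    genMat n i * genMat n j = -(genMat n j * genMat n i) := by
  have hk : 0 < n / 2 := by omega
  unfold genMat
  rw [if_pos hi, if_neg hj1]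
  rw [Matrix.mul_smul, Matrix.smul_mul, ← smul_neg]
  congr 1
  apply slot_anticomm _ _ ⟨n / 2 - 1 - i / 2, by omega⟩
  · have h1 : ¬ ((n / 2 - 1 - i / 2 : ℕ) < n / 2 - 1 - i / 2) := by omega
    simp only [Fin.val_mk, h1, eq_self_iff_true, if_true, if_false]
    exact genG_anticomm_TM i
  · intro t ht
    have htv : (t : ℕ) ≠ n / 2 - 1 - i / 2 := fun hc => ht (Fin.ext hc)
    rcases lt_trichotomy (t : ℕ) (n / 2 - 1 - i / 2) with h | h | h
    · simp [h]
    · exact absurd h htv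
    · have h1 : ¬ ((t : ℕ) < n / 2 - 1 - i / 2) := by omega
      have h2 : ¬ ((t : ℕ) = n / 2 - 1 - i / 2) := by omega
      simp [h1, h2]

lemma genMat_anticomm {n : ℕ} {i j : ℕ} (hi : i < n) (hj : j < n) (hij : i ≠ j) :
    genMat n i * genMat n j = -(genMat n j * genMat n i) := by
  by_cases h1 : i < 2 * (n / 2) <;> by_cases h2 : j < 2 * (n / 2)
  · rcases lt_trichotomy (i / 2) (j / 2) with h | h | h
    · exact genMat_anticomm_aux h1 h2 h
    · exact genMat_anticomm_pair h1 h2 h hij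
    · rw [genMat_anticomm_aux h2 h1 h, neg_neg]
  · exact genMat_anticomm_top h1 h2
  · rw [genMat_anticomm_top h2 h1, neg_neg]
  · omega

lemma genMat_sq {n : ℕ} {i : ℕ} (hi : i < n) : genMat n i * genMat n i = -1 := by
  by_cases h1 : i < 2 * (n / 2)
  · have hk0 : 0 < n / 2 := by omega
    unfold genMat
    rw [if_pos h1, tensorOp_mul]
    rw [show (-1 : Matrix (SpIdx n) (SpIdx n) ℂ)
        = -(tensorOp (fun _ : Fin (n / 2) => (1 : Matrix (Fin 2) (Fin 2) ℂ))) by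
      rw [tensorOp_one]]
    apply tensorOp_neg_slot ⟨n / 2 - 1 - i / 2, by omega⟩
    · have hlt : ¬ ((n / 2 - 1 - i / 2 : ℕ) < n / 2 - 1 - i / 2) := by omega
      simp only [Fin.val_mk, hlt, eq_self_iff_true, if_true, if_false]
      rw [genG_sq]
    · intro t ht
      have htv : (t : ℕ) ≠ n / 2 - 1 - i / 2 := fun hc => ht (Fin.ext hc)
      rcases lt_trichotomy (t : ℕ) (n / 2 - 1 - i / 2) with h | h | h
      · simp [h]
      · exact absurd h htv
      · have h1 : ¬ ((t : ℕ) < n / 2 - 1 - i / 2) := by omega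
        have h2 : ¬ ((t : ℕ) = n / 2 - 1 - i / 2) := by omega
        simp [h1, h2, TM_mul_TM]
  · unfold genMat
    rw [if_neg h1, Matrix.smul_mul, Matrix.mul_smul, tensorOp_mul, smul_smul,
        Complex.I_mul_I]
    simp only [TM_mul_TM]
    rw [tensorOp_one, neg_one_smul]

lemma genMat_ct {n : ℕ} {i : ℕ} (hi : i < n) : (genMat n i)ᴴ = -genMat n i := by
  by_cases h1 : i < 2 * (n / 2)
  · have hk0 : 0 < n / 2 := by omega
    unfold genMat
    rw [if_pos h1, tensorOp_ct]
    apply tensorOp_neg_slot ⟨n / 2 - 1 - i / 2, by omega⟩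
    · have hlt : ¬ ((n / 2 - 1 - i / 2 : ℕ) < n / 2 - 1 - i / 2) := by omega
      simp only [Fin.val_mk, hlt, eq_self_iff_true, if_true, if_false]
      exact genG_ct i
    · intro t ht
      have htv : (t : ℕ) ≠ n / 2 - 1 - i / 2 := fun hc => ht (Fin.ext hc)
      rcases lt_trichotomy (t : ℕ) (n / 2 - 1 - i / 2) with h | h | h
      · simp [h]
      · exact absurd h htv
      · have h1 : ¬ ((t : ℕ) < n / 2 - 1 - i / 2) := by omega
        have h2 : ¬ ((t : ℕ) = n / 2 - 1 - i / 2) := by omega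
        simp [h1, h2, TM_ct]
  · unfold genMat
    rw [if_neg h1, Matrix.conjTranspose_smul, tensorOp_ct]
    simp only [TM_ct, Complex.star_def, Complex.conj_I, neg_smul]

end GenMat
-- ===== Chunk 3: vecMat algebra =====
section VecMat

variable {n : ℕ}

lemma rn_inner (x y : Rn n) : (inner ℝ x y : ℝ) = ∑ i, x i * y i := by
  simp [PiLp.inner_apply, RCLike.inner_apply, mul_comm]

lemma vecMat_add (x y : Rn n) : vecMat n (x + y) = vecMat n x + vecMat n y := by
  simp only [vecMat, ← Finset.sum_add_distrib]
  refine Finset.sum_congr rfl fun i _ => ?_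
  rw [PiLp.add_apply, Complex.ofReal_add, add_smul]

lemma vecMat_smul (c : ℝ) (x : Rn n) : vecMat n (c • x) = (c : ℂ) • vecMat n x := by
  simp only [vecMat, Finset.smul_sum]
  refine Finset.sum_congr rfl fun i _ => ?_
  rw [PiLp.smul_apply, smul_eq_mul, Complex.ofReal_mul, smul_smul]

lemma vecMat_neg (x : Rn n) : vecMat n (-x) = -vecMat n x := by
  have := vecMat_smul (-1 : ℝ) x
  simpa using this

lemma vecMat_sub (x y : Rn n) : vecMat n (x - y) = vecMat n x - vecMat n y := by
  rw [sub_eq_add_neg, vecMat_add, vecMat_neg, sub_eq_add_neg]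

lemma vecMat_sum {ι : Type*} (s : Finset ι) (f : ι → Rn n) :
    vecMat n (∑ i ∈ s, f i) = ∑ i ∈ s, vecMat n (f i) := by
  classical
  induction s using Finset.induction_on with
  | empty => simp [vecMat]
  | insert _ _ h ih => rw [Finset.sum_insert h, Finset.sum_insert h, vecMat_add, ih]

lemma vecMat_mul_expand (x y : Rn n) :
    vecMat n x * vecMat n y
      = ∑ i : Fin n, ∑ j : Fin n, ((x i * y j : ℝ) : ℂ) • (genMat n (i:ℕ) * genMat n (j:ℕ)) := by
  simp only [vecMat, Finset.sum_mul, Finset.mul_sum, Matrix.smul_mul, Matrix.mul_smul,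
    smul_smul, Complex.ofReal_mul]
  rw [Finset.sum_comm]
  refine Finset.sum_congr rfl fun i _ => Finset.sum_congr rfl fun j _ => ?_
  rw [mul_comm ((y j : ℂ)) ((x i : ℂ))]

lemma vecMat_clifford (x y : Rn n) :
    vecMat n x * vecMat n y + vecMat n y * vecMat n x
      = ((-2 * (inner ℝ x y : ℝ) : ℝ) : ℂ) • 1 := by
  conv_lhs => rw [vecMat_mul_expand x y, vecMat_mul_expand y x]
  conv_lhs => rw [show (∑ i : Fin n, ∑ j : Fin n, ((y i * x j : ℝ) : ℂ) • (genMat n (i:ℕ) * genMat n (j:ℕ)))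
      = ∑ i : Fin n, ∑ j : Fin n, ((y j * x i : ℝ) : ℂ) • (genMat n (j:ℕ) * genMat n (i:ℕ)) from
    Finset.sum_comm]
  rw [← Finset.sum_add_distrib]
  have key : ∀ i : Fin n,
      (∑ j : Fin n, ((x i * y j : ℝ) : ℂ) • (genMat n (i:ℕ) * genMat n (j:ℕ)))
        + (∑ j : Fin n, ((y j * x i : ℝ) : ℂ) • (genMat n (j:ℕ) * genMat n (i:ℕ)))
      = ((-2 * (x i * y i) : ℝ) : ℂ) • 1 := by
    intro i
    rw [← Finset.sum_add_distrib]
    rw [Finset.sum_eq_single i]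
    · rw [mul_comm (y i) (x i), ← smul_add, genMat_sq i.isLt]
      have h21 : (-1 + -1 : Matrix (SpIdx n) (SpIdx n) ℂ) = (-2 : ℂ) • (1 : Matrix (SpIdx n) (SpIdx n) ℂ) := by
        rw [neg_smul, two_smul]
        abel
      rw [h21, smul_smul]
      congr 1
      push_cast
      ring
    · intro j _ hji
      have hne : (j : ℕ) ≠ (i : ℕ) := fun hc => hji (Fin.ext hc)
      rw [mul_comm (y j) (x i), ← smul_add,
        genMat_anticomm j.isLt i.isLt hne, add_neg_cancel, smul_zero]
    · intro hmem; exact absurd (Finset.mem_univ i) hmem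
  rw [Finset.sum_congr rfl fun i _ => key i]
  rw [← Finset.sum_smul, rn_inner]
  congr 1
  push_cast
  rw [Finset.mul_sum]

lemma vecMat_sq (x : Rn n) :
    vecMat n x * vecMat n x = ((-(inner ℝ x x : ℝ) : ℝ) : ℂ) • 1 := by
  have h := vecMat_clifford x x
  have h2 : (2 : ℂ) • (vecMat n x * vecMat n x)
      = (2 : ℂ) • (((-(inner ℝ x x : ℝ) : ℝ) : ℂ) • 1) := by
    rw [two_smul, h, smul_smul]
    push_cast
    ring_nf
  exact smul_right_injective _ (by norm_num) h2

lemma vecMat_ct (x : Rn n) : (vecMat n x)ᴴ = -vecMat n x := by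
  simp only [vecMat, Matrix.conjTranspose_sum, Matrix.conjTranspose_smul]
  rw [← Finset.sum_neg_distrib]
  refine Finset.sum_congr rfl fun i _ => ?_
  rw [genMat_ct i.isLt, Complex.star_def, Complex.conj_ofReal, smul_neg]

lemma vecMat_unit_sq {x : Rn n} (hx : ‖x‖ = 1) : vecMat n x * vecMat n x = -1 := by
  rw [vecMat_sq, real_inner_self_eq_norm_sq, hx]
  norm_num

lemma vecMat_unit_unitary {x : Rn n} (hx : ‖x‖ = 1) :
    (vecMat n x)ᴴ * vecMat n x = 1 := by
  rw [vecMat_ct, Matrix.neg_mul, vecMat_unit_sq hx, neg_neg]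

lemma vecMat_single (i : Fin n) : vecMat n (_root_.stdBasis n i) = genMat n (i : ℕ) := by
  rw [vecMat, Finset.sum_eq_single i]
  · simp [_root_.stdBasis, EuclideanSpace.single_apply]
  · intro j _ hji
    simp [_root_.stdBasis, EuclideanSpace.single_apply, hji]
  · intro hmem; exact absurd (Finset.mem_univ i) hmem

lemma smul_one_matrix_inj {c d : ℂ}
    (h : c • (1 : Matrix (SpIdx n) (SpIdx n) ℂ) = d • 1) : c = d := by
  have := congrArg (fun M : Matrix (SpIdx n) (SpIdx n) ℂ => M default default) h
  simpa [Matrix.one_apply] using this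

lemma spin_prod_unitary (L : List (Rn n)) (hL : ∀ x ∈ L, ‖x‖ = 1) :
    ((L.map (vecMat n)).prod)ᴴ * (L.map (vecMat n)).prod = 1 := by
  induction L with
  | nil => simp
  | cons v L ih =>
    simp only [List.map_cons, List.prod_cons, Matrix.conjTranspose_mul]
    have hv : ‖v‖ = 1 := hL v (List.mem_cons_self)
    have ih' := ih fun x hx => hL x (List.mem_cons_of_mem v hx)
    calc ((L.map (vecMat n)).prod)ᴴ * (vecMat n v)ᴴ * (vecMat n v * (L.map (vecMat n)).prod)
        = ((L.map (vecMat n)).prod)ᴴ * ((vecMat n v)ᴴ * vecMat n v) * (L.map (vecMat n)).prod := by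
          rw [Matrix.mul_assoc, Matrix.mul_assoc, Matrix.mul_assoc]
      _ = 1 := by rw [vecMat_unit_unitary hv, Matrix.mul_one, ih']

lemma spinMat_unitary {g : Matrix (SpIdx n) (SpIdx n) ℂ} (hg : g ∈ SpinMat n) :
    gᴴ * g = 1 := by
  obtain ⟨L, _, hL, rfl⟩ := hg
  exact spin_prod_unitary L hL

lemma spinMat_unitary' {g : Matrix (SpIdx n) (SpIdx n) ℂ} (hg : g ∈ SpinMat n) :
    g * gᴴ = 1 :=
  mul_eq_one_comm.mp (spinMat_unitary hg)

/-- the reflection map -/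
def reflMap (v : Rn n) : Rn n →ₗ[ℝ] Rn n where
  toFun y := (2 * (inner ℝ v y : ℝ)) • v - y
  map_add' a b := by
    simp only [inner_add_right]
    rw [mul_add, add_smul]
    abel
  map_smul' c a := by
    simp only [inner_smul_right, RingHom.id_apply]
    rw [smul_sub, smul_smul]
    ring_nf

lemma reflMap_isometry {v : Rn n} (hv : ‖v‖ = 1) (a b : Rn n) :
    (inner ℝ (reflMap v a) (reflMap v b) : ℝ) = inner ℝ a b := by
  have hvv : (inner ℝ v v : ℝ) = 1 := by
    rw [real_inner_self_eq_norm_sq, hv]; norm_num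
  simp only [reflMap, LinearMap.coe_mk, AddHom.coe_mk]
  rw [inner_sub_left, inner_sub_right, inner_sub_right, real_inner_smul_left,
    real_inner_smul_left, real_inner_smul_right, real_inner_smul_right, hvv]
  rw [real_inner_comm b v, real_inner_comm a v]
  ring

lemma vecMat_refl_conj {v : Rn n} (hv : ‖v‖ = 1) (y : Rn n) :
    vecMat n y * vecMat n v = vecMat n v * vecMat n (reflMap v y) := by
  have hcl := vecMat_clifford y v
  have : vecMat n (reflMap v y) = ((2 * (inner ℝ v y : ℝ) : ℝ) : ℂ) • vecMat n v - vecMat n y := by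
    show vecMat n ((2 * (inner ℝ v y : ℝ)) • v - y) = _
    rw [vecMat_sub, vecMat_smul]
  rw [this, Matrix.mul_sub, Matrix.mul_smul, vecMat_unit_sq hv]
  have h2 : ((2 * (inner ℝ v y : ℝ) : ℝ) : ℂ) • (-1 : Matrix (SpIdx n) (SpIdx n) ℂ)
      = ((-2 * (inner ℝ y v : ℝ) : ℝ) : ℂ) • (1 : Matrix (SpIdx n) (SpIdx n) ℂ) := by
    rw [smul_neg, ← neg_smul, real_inner_comm v y]
    congr 1
    push_cast
    ring
  rw [h2, ← hcl]
  abel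

lemma spin_conj_exists (L : List (Rn n)) (hL : ∀ x ∈ L, ‖x‖ = 1) :
    ∃ σ : Rn n →ₗ[ℝ] Rn n, (∀ a b : Rn n, (inner ℝ (σ a) (σ b) : ℝ) = inner ℝ a b) ∧
      ∀ y : Rn n, vecMat n y * (L.map (vecMat n)).prod
        = (L.map (vecMat n)).prod * vecMat n (σ y) := by
  induction L with
  | nil => exact ⟨LinearMap.id, fun a b => rfl, fun y => by simp⟩
  | cons v L ih =>
    obtain ⟨σ', hσ'iso, hσ'⟩ := ih fun x hx => hL x (List.mem_cons_of_mem v hx)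
    have hv : ‖v‖ = 1 := hL v (List.mem_cons_self)
    refine ⟨σ' ∘ₗ reflMap v, fun a b => by
      simp only [LinearMap.comp_apply]
      rw [hσ'iso, reflMap_isometry hv], fun y => ?_⟩
    simp only [List.map_cons, List.prod_cons, LinearMap.comp_apply]
    rw [← Matrix.mul_assoc, vecMat_refl_conj hv y, Matrix.mul_assoc, hσ' (reflMap v y),
      Matrix.mul_assoc]

end VecMat
-- ===== Chunk 4: actions and inner ℝ products =====
section Actions

variable {r n : ℕ}

lemma actN_mulM (M N : Matrix (SpIdx n) (SpIdx n) ℂ) (φ : TwSpinor r n) :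
    actN M (actN N φ) = actN (M * N) φ := by
  ext p
  simp only [actN, Matrix.mul_apply, Finset.sum_mul, Finset.mul_sum]
  rw [Finset.sum_comm]
  exact Finset.sum_congr rfl fun b _ => Finset.sum_congr rfl fun c _ => by ring

lemma actR_mulM (M N : Matrix (SpIdx r) (SpIdx r) ℂ) (φ : TwSpinor r n) :
    actR M (actR N φ) = actR (M * N) φ := by
  ext p
  simp only [actR, Matrix.mul_apply, Finset.sum_mul, Finset.mul_sum]
  rw [Finset.sum_comm]
  exact Finset.sum_congr rfl fun b _ => Finset.sum_congr rfl fun c _ => by ring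

lemma actN_actR_comm (M : Matrix (SpIdx n) (SpIdx n) ℂ) (N : Matrix (SpIdx r) (SpIdx r) ℂ)
    (φ : TwSpinor r n) : actN M (actR N φ) = actR N (actN M φ) := by
  ext p
  simp only [actN, actR, Finset.mul_sum]
  rw [Finset.sum_comm]
  exact Finset.sum_congr rfl fun b _ => Finset.sum_congr rfl fun c _ => by ring

lemma actN_one (φ : TwSpinor r n) : actN (1 : Matrix (SpIdx n) (SpIdx n) ℂ) φ = φ := by
  ext p
  simp [actN, Matrix.one_apply]

lemma actR_one (φ : TwSpinor r n) : actR (1 : Matrix (SpIdx r) (SpIdx r) ℂ) φ = φ := by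
  ext p
  simp [actR, Matrix.one_apply]

lemma actN_addM (M N : Matrix (SpIdx n) (SpIdx n) ℂ) (φ : TwSpinor r n) :
    actN (M + N) φ = actN M φ + actN N φ := by
  ext p
  simp [actN, Matrix.add_apply, add_mul, Finset.sum_add_distrib]

lemma actR_addM (M N : Matrix (SpIdx r) (SpIdx r) ℂ) (φ : TwSpinor r n) :
    actR (M + N) φ = actR M φ + actR N φ := by
  ext p
  simp [actR, Matrix.add_apply, add_mul, Finset.sum_add_distrib]

lemma actN_smulM (c : ℂ) (M : Matrix (SpIdx n) (SpIdx n) ℂ) (φ : TwSpinor r n) :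
    actN (c • M) φ = c • actN M φ := by
  ext p
  simp [actN, Matrix.smul_apply, Finset.mul_sum, mul_assoc]

lemma actR_smulM (c : ℂ) (M : Matrix (SpIdx r) (SpIdx r) ℂ) (φ : TwSpinor r n) :
    actR (c • M) φ = c • actR M φ := by
  ext p
  simp [actR, Matrix.smul_apply, Finset.mul_sum, mul_assoc]

lemma actN_negM (M : Matrix (SpIdx n) (SpIdx n) ℂ) (φ : TwSpinor r n) :
    actN (-M) φ = -actN M φ := by
  have := actN_smulM (-1 : ℂ) M φ
  simpa using this

lemma actR_negM (M : Matrix (SpIdx r) (SpIdx r) ℂ) (φ : TwSpinor r n) :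
    actR (-M) φ = -actR M φ := by
  have := actR_smulM (-1 : ℂ) M φ
  simpa using this

lemma actN_sumM {ι : Type*} (s : Finset ι) (f : ι → Matrix (SpIdx n) (SpIdx n) ℂ)
    (φ : TwSpinor r n) : actN (∑ i ∈ s, f i) φ = ∑ i ∈ s, actN (f i) φ := by
  classical
  induction s using Finset.induction_on with
  | empty => ext p; simp [actN]
  | insert _ _ h ih => rw [Finset.sum_insert h, Finset.sum_insert h, actN_addM, ih]

lemma actR_sumM {ι : Type*} (s : Finset ι) (f : ι → Matrix (SpIdx r) (SpIdx r) ℂ)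
    (φ : TwSpinor r n) : actR (∑ i ∈ s, f i) φ = ∑ i ∈ s, actR (f i) φ := by
  classical
  induction s using Finset.induction_on with
  | empty => ext p; simp [actR]
  | insert _ _ h ih => rw [Finset.sum_insert h, Finset.sum_insert h, actR_addM, ih]

lemma actN_phi_smul (M : Matrix (SpIdx n) (SpIdx n) ℂ) (c : ℂ) (φ : TwSpinor r n) :
    actN M (c • φ) = c • actN M φ := by
  ext p
  simp [actN, Finset.mul_sum]
  exact Finset.sum_congr rfl fun b _ => by ring

lemma actR_phi_smul (M : Matrix (SpIdx r) (SpIdx r) ℂ) (c : ℂ) (φ : TwSpinor r n) :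
    actR M (c • φ) = c • actR M φ := by
  ext p
  simp [actR, Finset.mul_sum]
  exact Finset.sum_congr rfl fun b _ => by ring

lemma actN_phi_add (M : Matrix (SpIdx n) (SpIdx n) ℂ) (φ ψ : TwSpinor r n) :
    actN M (φ + ψ) = actN M φ + actN M ψ := by
  ext p
  simp [actN, mul_add, Finset.sum_add_distrib]

lemma actN_phi_sum {ι : Type*} (s : Finset ι) (M : Matrix (SpIdx n) (SpIdx n) ℂ)
    (f : ι → TwSpinor r n) : actN M (∑ i ∈ s, f i) = ∑ i ∈ s, actN M (f i) := by
  classical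
  induction s using Finset.induction_on with
  | empty => ext p; simp [actN]
  | insert _ _ h ih => rw [Finset.sum_insert h, Finset.sum_insert h, actN_phi_add, ih]

lemma actN_phi_neg (M : Matrix (SpIdx n) (SpIdx n) ℂ) (φ : TwSpinor r n) :
    actN M (-φ) = -actN M φ := by
  have := actN_phi_smul M (-1 : ℂ) φ
  simpa using this

lemma actR_phi_neg (M : Matrix (SpIdx r) (SpIdx r) ℂ) (φ : TwSpinor r n) :
    actR M (-φ) = -actR M φ := by
  have := actR_phi_smul M (-1 : ℂ) φ
  simpa using this

-- twAct and kronOp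
lemma twAct_kron (h : Matrix (SpIdx r) (SpIdx r) ℂ) (g : Matrix (SpIdx n) (SpIdx n) ℂ)
    (φ : TwSpinor r n) : twAct (kronOp h g) φ = actR h (actN g φ) := by
  ext p
  simp only [twAct, kronOp, actR, actN, Matrix.of_apply, Finset.mul_sum,
    Fintype.sum_prod_type]
  exact Finset.sum_congr rfl fun a _ => Finset.sum_congr rfl fun b _ => by ring

lemma twAct_smul (c : ℂ) (U : Matrix (SpIdx r × SpIdx n) (SpIdx r × SpIdx n) ℂ)
    (φ : TwSpinor r n) : twAct (c • U) φ = c • twAct U φ := by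
  ext p
  simp [twAct, Matrix.smul_apply, Finset.mul_sum, mul_assoc]

lemma twAct_mul (A B : Matrix (SpIdx r × SpIdx n) (SpIdx r × SpIdx n) ℂ) (φ : TwSpinor r n) :
    twAct (A * B) φ = twAct A (twAct B φ) := by
  ext p
  simp only [twAct, Matrix.mul_apply, Finset.sum_mul, Finset.mul_sum]
  rw [Finset.sum_comm]
  exact Finset.sum_congr rfl fun b _ => Finset.sum_congr rfl fun c _ => by ring

lemma twAct_one (φ : TwSpinor r n) : twAct (1 : Matrix (SpIdx r × SpIdx n) (SpIdx r × SpIdx n) ℂ) φ = φ := by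
  ext p
  simp [twAct, Matrix.one_apply]

lemma kronOp_mul (A C : Matrix (SpIdx r) (SpIdx r) ℂ) (B D : Matrix (SpIdx n) (SpIdx n) ℂ) :
    kronOp A B * kronOp C D = kronOp (A * C) (B * D) := by
  ext p q
  simp only [kronOp, Matrix.mul_apply, Matrix.of_apply, Fintype.sum_prod_type,
    Finset.sum_mul, Finset.mul_sum]
  rw [Finset.sum_comm]
  refine Finset.sum_congr rfl fun a _ => Finset.sum_congr rfl fun b _ => by ring

lemma kronOp_ct (A : Matrix (SpIdx r) (SpIdx r) ℂ) (B : Matrix (SpIdx n) (SpIdx n) ℂ) :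
    (kronOp A B)ᴴ = kronOp Aᴴ Bᴴ := by
  ext p q
  simp [kronOp, Matrix.conjTranspose_apply]

lemma kronOp_one : kronOp (1 : Matrix (SpIdx r) (SpIdx r) ℂ) (1 : Matrix (SpIdx n) (SpIdx n) ℂ)
    = 1 := by
  ext p q
  simp only [kronOp, Matrix.of_apply, Matrix.one_apply]
  rcases Prod.ext_iff.symm with _
  by_cases h1 : p.1 = q.1 <;> by_cases h2 : p.2 = q.2 <;>
    simp [h1, h2, Prod.ext_iff]

-- inner ℝ products
lemma twAct_inner (M : Matrix (SpIdx r × SpIdx n) (SpIdx r × SpIdx n) ℂ) (φ ψ : TwSpinor r n) :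
    (inner ℂ (twAct M φ) ψ : ℂ) = inner ℂ φ (twAct Mᴴ ψ) := by
  simp only [PiLp.inner_apply, RCLike.inner_apply, twAct, Matrix.conjTranspose_apply,
    map_sum, _root_.map_mul, Finset.mul_sum, Finset.sum_mul, Complex.star_def]
  rw [Finset.sum_comm]
  refine Finset.sum_congr rfl fun p _ => Finset.sum_congr rfl fun q _ => by ring

lemma twAct_unitary_inner {M : Matrix (SpIdx r × SpIdx n) (SpIdx r × SpIdx n) ℂ}
    (hM : Mᴴ * M = 1) (φ ψ : TwSpinor r n) :
    (inner ℂ (twAct M φ) (twAct M ψ) : ℂ) = inner ℂ φ ψ := by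
  rw [twAct_inner, ← twAct_mul, hM, twAct_one]

lemma twAct_unitary_norm {M : Matrix (SpIdx r × SpIdx n) (SpIdx r × SpIdx n) ℂ}
    (hM : Mᴴ * M = 1) (φ : TwSpinor r n) : ‖twAct M φ‖ = ‖φ‖ := by
  have h := twAct_unitary_inner hM φ φ
  have h1 : (‖twAct M φ‖ : ℝ) ^ 2 = ‖φ‖ ^ 2 := by
    have e1 := @inner_self_eq_norm_sq ℂ _ _ _ _ (twAct M φ)
    have e2 := @inner_self_eq_norm_sq ℂ _ _ _ _ φ
    rw [← e1, ← e2, h]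
  rw [← Real.sqrt_sq (norm_nonneg (twAct M φ)), h1, Real.sqrt_sq (norm_nonneg φ)]

lemma actR_inner (M : Matrix (SpIdx r) (SpIdx r) ℂ) (φ ψ : TwSpinor r n) :
    (inner ℂ (actR M φ) ψ : ℂ) = inner ℂ φ (actR Mᴴ ψ) := by
  have h1 : actR M φ = twAct (kronOp M 1) φ := by
    rw [twAct_kron, actN_one]
  have h2 : actR Mᴴ ψ = twAct (kronOp Mᴴ 1) ψ := by
    rw [twAct_kron, actN_one]
  rw [h1, h2, twAct_inner]
  congr 1
  rw [kronOp_ct, Matrix.conjTranspose_one]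

end Actions
-- ===== Chunk 5: volume element =====
section Volume

variable {r : ℕ}

lemma prod_anticomm (x : Matrix (SpIdx r) (SpIdx r) ℂ) (L : List (Matrix (SpIdx r) (SpIdx r) ℂ))
    (hL : ∀ a ∈ L, a * x = -(x * a)) :
    L.prod * x = ((-1 : ℂ) ^ L.length) • (x * L.prod) := by
  induction L with
  | nil => simp
  | cons a L ih =>
    have ha := hL a (List.mem_cons_self)
    have ih' := ih fun b hb => hL b (List.mem_cons_of_mem a hb)
    rw [List.prod_cons, List.length_cons, Matrix.mul_assoc, ih', Matrix.mul_smul, ← Matrix.mul_assoc,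
      ha, Matrix.neg_mul, smul_neg, ← neg_smul, Matrix.mul_assoc]
    congr 1
    rw [pow_succ]
    ring

lemma prod_anticomm' (x : Matrix (SpIdx r) (SpIdx r) ℂ) (L : List (Matrix (SpIdx r) (SpIdx r) ℂ))
    (hL : ∀ a ∈ L, a * x = -(x * a)) :
    x * L.prod = ((-1 : ℂ) ^ L.length) • (L.prod * x) := by
  rw [prod_anticomm x L hL, smul_smul, ← pow_add, Even.neg_one_pow ⟨L.length, rfl⟩, one_smul]

lemma genMat_mul_vol (hr : r % 2 = 0) {i : ℕ} (hi : i < r) :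
    volMat r * genMat r i = -(genMat r i * volMat r) := by
  have hsplit : List.range r = List.range i ++ [i]
      ++ (List.range (r - i - 1)).map (fun t => i + 1 + t) := by
    have h1 : r = (i + 1) + (r - i - 1) := by omega
    conv_lhs => rw [h1, List.range_add, List.range_succ]
  set A := ((List.range i).map (genMat r)).prod with hA
  set B := (((List.range (r - i - 1)).map (fun t => i + 1 + t)).map (genMat r)).prod with hB
  have hvol : volMat r = A * (genMat r i * B) := by
    rw [volMat, hsplit]
    simp only [List.map_append, List.prod_append, List.map_cons, List.map_nil,
      List.prod_cons, List.prod_nil, Matrix.mul_one, hA, hB]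
    rw [Matrix.mul_assoc]
  have hBcomm : B * genMat r i = ((-1 : ℂ) ^ (r - i - 1)) • (genMat r i * B) := by
    have key := prod_anticomm (genMat r i)
      (List.map (genMat r) (List.map (fun t => i + 1 + t) (List.range (r - i - 1)))) ?_
    · rw [hB, key, List.length_map, List.length_map, List.length_range]
    · intro a ha
      simp only [List.mem_map, List.mem_range] at ha
      obtain ⟨b, ⟨t, ht, rfl⟩, rfl⟩ := ha
      exact genMat_anticomm (by omega) hi (by omega)
  have hAcomm : genMat r i * A = ((-1 : ℂ) ^ i) • (A * genMat r i) := by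
    have key := prod_anticomm' (genMat r i) (List.map (genMat r) (List.range i)) ?_
    · rw [hA, key, List.length_map, List.length_range]
    · intro a ha
      simp only [List.mem_map, List.mem_range] at ha
      obtain ⟨t, ht, rfl⟩ := ha
      exact genMat_anticomm (by omega) hi (by omega)
  have hsq := genMat_sq (n := r) hi
  have lhs_eq : volMat r * genMat r i = ((-1 : ℂ) ^ (r - i - 1)) • -(A * B) := by
    rw [hvol, Matrix.mul_assoc, Matrix.mul_assoc, hBcomm, Matrix.mul_smul, ← Matrix.mul_assoc,
      hsq, Matrix.mul_smul, Matrix.neg_mul, Matrix.one_mul]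
    rw [Matrix.mul_neg]
  have rhs_eq : genMat r i * volMat r = ((-1 : ℂ) ^ i) • -(A * B) := by
    rw [hvol, ← Matrix.mul_assoc, hAcomm, Matrix.smul_mul, Matrix.mul_assoc, ← Matrix.mul_assoc (genMat r i),
      hsq, Matrix.neg_mul, Matrix.one_mul, Matrix.mul_neg]
  rw [lhs_eq, rhs_eq, ← neg_smul]
  congr 1
  have hpar : (r - i - 1) % 2 = (i + 1) % 2 := by omega
  rcases Nat.even_or_odd i with he | ho
  · have h1 : Odd (r - i - 1) := by
      rw [Nat.odd_iff]
      rw [Nat.even_iff] at he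
      omega
    rw [Odd.neg_one_pow h1, Even.neg_one_pow he]
  · have h1 : Even (r - i - 1) := by
      rw [Nat.even_iff]
      rw [Nat.odd_iff] at ho
      omega
    rw [Even.neg_one_pow h1, Odd.neg_one_pow ho, neg_neg]

lemma vol_comm_vecMat (hr : r % 2 = 0) (v : Rn r) :
    vecMat r v * volMat r = -(volMat r * vecMat r v) := by
  rw [vecMat, Finset.sum_mul, Matrix.mul_sum, ← Finset.sum_neg_distrib]
  refine Finset.sum_congr rfl fun i _ => ?_
  rw [Matrix.smul_mul, Matrix.mul_smul, genMat_mul_vol hr i.isLt, smul_neg, neg_neg]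

lemma vol_comm_spin (hr : r % 2 = 0) {h : Matrix (SpIdx r) (SpIdx r) ℂ} (hh : h ∈ SpinMat r) :
    volMat r * h = h * volMat r := by
  obtain ⟨L, hlen, hunit, rfl⟩ := hh
  have := prod_anticomm (volMat r) (L.map (vecMat r)) ?_
  · rw [this, List.length_map]
    have : Even L.length := Nat.even_iff.mpr hlen
    rw [Even.neg_one_pow this, one_smul]
  · intro a ha
    simp only [List.mem_map] at ha
    obtain ⟨v, hv, rfl⟩ := ha
    exact vol_comm_vecMat hr v

end Volume
-- ===== Chunk 6: frame independence of etaActionM =====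
section Frame

variable {r n : ℕ}

lemma rn_expand (x : Rn n) : x = ∑ p, x p • _root_.stdBasis n p := by
  ext q
  rw [WithLp.ofLp_sum, Finset.sum_apply]
  simp [_root_.stdBasis, EuclideanSpace.single_apply]

lemma std_inner (i j : Fin n) :
    (inner ℝ (_root_.stdBasis n i) (_root_.stdBasis n j) : ℝ) = if i = j then 1 else 0 := by
  rw [rn_inner]
  simp only [_root_.stdBasis, EuclideanSpace.single_apply]
  by_cases h : i = j
  · subst h
    rw [if_pos rfl, Finset.sum_eq_single i] <;> simp +contextual [eq_comm]
  · rw [if_neg h, Finset.sum_eq_zero]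
    intro t _
    by_cases h1 : t = i <;> by_cases h2 : t = j <;> simp_all

section Bilin
variable {E : Type*} [AddCommGroup E] [Module ℝ E]

lemma lin_sum_expand (f : Rn n → E)
    (hfa : ∀ X Y, f (X + Y) = f X + f Y) (hfs : ∀ (c : ℝ) X, f (c • X) = c • f X)
    (X : Rn n) : f X = ∑ p, X p • f (_root_.stdBasis n p) := by
  have h0 : f 0 = 0 := by
    have := hfs 0 0
    simpa using this
  have key : ∀ (s : Finset (Fin n)) (c : Fin n → ℝ),
      f (∑ p ∈ s, c p • _root_.stdBasis n p) = ∑ p ∈ s, c p • f (_root_.stdBasis n p) := by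
    intro s
    induction s using Finset.induction_on with
    | empty => intro c; simpa using h0
    | insert _ _ hns ih =>
      intro c
      rw [Finset.sum_insert hns, Finset.sum_insert hns, hfa, hfs, ih]
  conv_lhs => rw [rn_expand X]
  exact key Finset.univ X

lemma bilin_sum_expand (f : Rn n → Rn n → E)
    (hfa : ∀ X Y Z, f (X + Y) Z = f X Z + f Y Z)
    (hfs : ∀ (c : ℝ) X Z, f (c • X) Z = c • f X Z)
    (hga : ∀ X Y Z, f X (Y + Z) = f X Y + f X Z)
    (hgs : ∀ (c : ℝ) X Z, f X (c • Z) = c • f X Z)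
    (X Y : Rn n) :
    f X Y = ∑ p, ∑ q, (X p * Y q) • f (_root_.stdBasis n p) (_root_.stdBasis n q) := by
  rw [lin_sum_expand (fun Z => f Z Y) (fun a b => hfa a b Y) (fun c a => hfs c a Y) X]
  refine Finset.sum_congr rfl fun p _ => ?_
  rw [lin_sum_expand (f (_root_.stdBasis n p)) (hga _) (fun c Z => hgs c _ Z) Y, Finset.smul_sum]
  refine Finset.sum_congr rfl fun q _ => ?_
  rw [smul_smul]

lemma trace_indep (f : Rn n → Rn n → E)
    (hfa : ∀ X Y Z, f (X + Y) Z = f X Z + f Y Z)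
    (hfs : ∀ (c : ℝ) X Z, f (c • X) Z = c • f X Z)
    (hga : ∀ X Y Z, f X (Y + Z) = f X Y + f X Z)
    (hgs : ∀ (c : ℝ) X Z, f X (c • Z) = c • f X Z)
    (v : Fin n → Rn n) (hv : ∀ i j, (inner ℝ (v i) (v j) : ℝ) = if i = j then 1 else 0) :
    ∑ i, f (v i) (v i) = ∑ p, f (_root_.stdBasis n p) (_root_.stdBasis n p) := by
  have hAA : ∀ p q : Fin n, (∑ i, v i p * v i q) = if p = q then 1 else 0 := by
    intro p q
    set A : Matrix (Fin n) (Fin n) ℝ := Matrix.of fun a i => v i a with hA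
    have h1 : Aᵀ * A = 1 := by
      ext i j
      simp only [Matrix.mul_apply, Matrix.transpose_apply, hA, Matrix.of_apply,
        Matrix.one_apply]
      rw [← rn_inner, hv i j]
    have h2 : A * Aᵀ = 1 := mul_eq_one_comm.mp h1
    have := congrArg (fun B : Matrix (Fin n) (Fin n) ℝ => B p q) h2
    simpa [Matrix.mul_apply, Matrix.transpose_apply, hA, Matrix.one_apply] using this
  have expand : ∀ i, f (v i) (v i)
      = ∑ p, ∑ q, (v i p * v i q) • f (_root_.stdBasis n p) (_root_.stdBasis n q) :=
    fun i => bilin_sum_expand f hfa hfs hga hgs (v i) (v i)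
  rw [Finset.sum_congr rfl fun i _ => expand i]
  rw [Finset.sum_comm]
  have step1 : ∀ p : Fin n, (∑ i, ∑ q, (v i p * v i q) • f (_root_.stdBasis n p) (_root_.stdBasis n q))
      = ∑ q, (if p = q then (1:ℝ) else 0) • f (_root_.stdBasis n p) (_root_.stdBasis n q) := by
    intro p
    rw [Finset.sum_comm]
    refine Finset.sum_congr rfl fun q _ => ?_
    rw [← Finset.sum_smul, hAA p q]
  rw [Finset.sum_congr rfl fun p _ => step1 p]
  refine Finset.sum_congr rfl fun p _ => ?_
  rw [Finset.sum_eq_single p]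
  · rw [if_pos rfl, one_smul]
  · intro q _ hq
    rw [if_neg (Ne.symm hq), zero_smul]
  · intro hmem; exact absurd (Finset.mem_univ p) hmem

end Bilin

-- wedgeMat properties
lemma wedge_add_left (X Y Z : Rn n) :
    wedgeMat n (X + Y) Z = wedgeMat n X Z + wedgeMat n Y Z := by
  simp only [wedgeMat, vecMat_add, Matrix.add_mul, inner_add_left]
  push_cast
  rw [add_smul]
  abel

lemma wedge_smul_left (c : ℝ) (X Z : Rn n) :
    wedgeMat n (c • X) Z = (c : ℂ) • wedgeMat n X Z := by
  simp only [wedgeMat, vecMat_smul, Matrix.smul_mul, real_inner_smul_left]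
  push_cast
  rw [smul_add, smul_smul]

lemma wedge_add_right (X Y Z : Rn n) :
    wedgeMat n X (Y + Z) = wedgeMat n X Y + wedgeMat n X Z := by
  simp only [wedgeMat, vecMat_add, Matrix.mul_add, inner_add_right]
  push_cast
  rw [add_smul]
  abel

lemma wedge_smul_right (c : ℝ) (X Z : Rn n) :
    wedgeMat n X (c • Z) = (c : ℂ) • wedgeMat n X Z := by
  simp only [wedgeMat, vecMat_smul, Matrix.mul_smul, real_inner_smul_right]
  push_cast
  rw [smul_add, smul_smul]

lemma wedge_self (X : Rn n) : wedgeMat n X X = 0 := by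
  rw [wedgeMat, vecMat_sq]
  push_cast
  rw [neg_smul, neg_add_cancel]

lemma wedge_antisymm (X Y : Rn n) : wedgeMat n Y X = -wedgeMat n X Y := by
  have hcl := vecMat_clifford Y X
  have h1 : vecMat n Y * vecMat n X
      = ((-2 * (inner ℝ Y X : ℝ) : ℝ) : ℂ) • 1 - vecMat n X * vecMat n Y := by
    rw [← hcl]; abel
  have hsym : (inner ℝ Y X : ℝ) = inner ℝ X Y := real_inner_comm X Y
  rw [wedgeMat, wedgeMat, h1, hsym]
  have h2 : ((-2 * (inner ℝ X Y : ℝ) : ℝ) : ℂ) • (1 : Matrix (SpIdx n) (SpIdx n) ℂ)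
      = -((((inner ℝ X Y : ℝ) : ℂ)) • 1 + (((inner ℝ X Y : ℝ) : ℂ)) • 1) := by
    rw [← two_smul ℂ, smul_smul]
    rw [← neg_smul]
    congr 1
    push_cast
    ring
  rw [h2]
  abel

-- etaW linearity
lemma etaW_add (Mr : Matrix (SpIdx r) (SpIdx r) ℂ) (φ : TwSpinor r n)
    (W W' : Matrix (SpIdx n) (SpIdx n) ℂ) :
    ((inner ℂ (actN (W + W') (actR Mr φ)) φ : ℂ)).re
      = ((inner ℂ (actN W (actR Mr φ)) φ : ℂ)).re
        + ((inner ℂ (actN W' (actR Mr φ)) φ : ℂ)).re := by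
  rw [actN_addM, inner_add_left]
  simp

lemma etaW_smul (Mr : Matrix (SpIdx r) (SpIdx r) ℂ) (φ : TwSpinor r n)
    (c : ℝ) (W : Matrix (SpIdx n) (SpIdx n) ℂ) :
    ((inner ℂ (actN ((c : ℂ) • W) (actR Mr φ)) φ : ℂ)).re
      = c * ((inner ℂ (actN W (actR Mr φ)) φ : ℂ)).re := by
  rw [actN_smulM, inner_smul_left]
  rw [Complex.conj_ofReal, Complex.re_ofReal_mul]

lemma etaM_add_left (Mr : Matrix (SpIdx r) (SpIdx r) ℂ) (φ : TwSpinor r n) (X Y Z : Rn n) :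
    etaM r n Mr φ (X + Y) Z = etaM r n Mr φ X Z + etaM r n Mr φ Y Z := by
  unfold etaM
  rw [wedge_add_left]
  exact etaW_add Mr φ _ _

lemma etaM_smul_left (Mr : Matrix (SpIdx r) (SpIdx r) ℂ) (φ : TwSpinor r n) (c : ℝ) (X Z : Rn n) :
    etaM r n Mr φ (c • X) Z = c * etaM r n Mr φ X Z := by
  unfold etaM
  rw [wedge_smul_left]
  exact etaW_smul Mr φ c _

lemma etaM_add_right (Mr : Matrix (SpIdx r) (SpIdx r) ℂ) (φ : TwSpinor r n) (X Y Z : Rn n) :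
    etaM r n Mr φ X (Y + Z) = etaM r n Mr φ X Y + etaM r n Mr φ X Z := by
  unfold etaM
  rw [wedge_add_right]
  exact etaW_add Mr φ _ _

lemma etaM_smul_right (Mr : Matrix (SpIdx r) (SpIdx r) ℂ) (φ : TwSpinor r n) (c : ℝ) (X Z : Rn n) :
    etaM r n Mr φ X (c • Z) = c * etaM r n Mr φ X Z := by
  unfold etaM
  rw [wedge_smul_right]
  exact etaW_smul Mr φ c _

lemma etaM_self (Mr : Matrix (SpIdx r) (SpIdx r) ℂ) (φ : TwSpinor r n) (X : Rn n) :
    etaM r n Mr φ X X = 0 := by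
  unfold etaM
  rw [wedge_self]
  have : actN (0 : Matrix (SpIdx n) (SpIdx n) ℂ) (actR Mr φ) = 0 := by
    have := actN_smulM (0 : ℂ) (0 : Matrix (SpIdx n) (SpIdx n) ℂ) (actR Mr φ)
    simpa using this
  rw [this, inner_zero_left]
  simp

lemma etaM_antisymm (Mr : Matrix (SpIdx r) (SpIdx r) ℂ) (φ : TwSpinor r n) (X Y : Rn n) :
    etaM r n Mr φ Y X = -etaM r n Mr φ X Y := by
  unfold etaM
  rw [wedge_antisymm, actN_negM, inner_neg_left]
  simp

end Frame
-- ===== Chunk 7: the frame lemma =====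
section FrameMain

variable {r n : ℕ}

lemma rsmul_coe (c : ℝ) (x : TwSpinor r n) : (c : ℂ) • x = c • x := by
  rw [← Complex.coe_algebraMap, algebraMap_smul]

lemma half_full {E : Type*} [AddCommGroup E] [Module ℝ E] (G : Fin n → Fin n → E)
    (hdiag : ∀ i, G i i = 0) (hsymm : ∀ i j, i ≠ j → G j i = G i j) :
    ∑ i, ∑ j, G i j = (2 : ℝ) • ∑ i, ∑ j, (if i < j then G i j else 0) := by
  have hsplit : ∀ i j, G i j
      = (if i < j then G i j else 0) + (if j < i then G i j else 0) := by
    intro i j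
    rcases lt_trichotomy i j with h | h | h
    · rw [if_pos h, if_neg (asymm h), add_zero]
    · subst h
      rw [if_neg (lt_irrefl i), add_zero, hdiag i]
    · rw [if_neg (asymm h), if_pos h, zero_add]
  have step1 : ∑ i, ∑ j, G i j
      = (∑ i, ∑ j, (if i < j then G i j else 0)) + (∑ i, ∑ j, (if j < i then G i j else 0)) := by
    rw [← Finset.sum_add_distrib]
    refine Finset.sum_congr rfl fun i _ => ?_
    rw [← Finset.sum_add_distrib]
    exact Finset.sum_congr rfl fun j _ => hsplit i j
  have step2 : (∑ i, ∑ j, (if j < i then G i j else 0))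
      = ∑ i, ∑ j, (if i < j then G i j else 0) := by
    rw [Finset.sum_comm]
    refine Finset.sum_congr rfl fun a _ => Finset.sum_congr rfl fun b _ => ?_
    by_cases h : a < b
    · rw [if_pos h, if_pos h, hsymm a b (ne_of_lt h)]
    · rw [if_neg h, if_neg h]
  rw [step1, step2, two_smul]

lemma vecMat_mul_antisymm {w : Fin n → Rn n}
    (hv : ∀ i j, (inner ℝ (w i) (w j) : ℝ) = if i = j then 1 else 0) {i j : Fin n} (hij : i ≠ j) :
    vecMat n (w j) * vecMat n (w i) = -(vecMat n (w i) * vecMat n (w j)) := by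
  have hcl := vecMat_clifford (w j) (w i)
  have h0 : (inner ℝ (w j) (w i) : ℝ) = 0 := by
    rw [hv j i, if_neg (Ne.symm hij)]
  rw [h0] at hcl
  simp only [mul_zero, Complex.ofReal_zero, zero_smul] at hcl
  exact eq_neg_of_add_eq_zero_left hcl

lemma etaAction_frame (Mr : Matrix (SpIdx r) (SpIdx r) ℂ) (φ : TwSpinor r n)
    (v : Fin n → Rn n) (hv : ∀ i j, (inner ℝ (v i) (v j) : ℝ) = if i = j then 1 else 0) :
    (∑ i : Fin n, ∑ j : Fin n, if i < j
        then ((etaM r n Mr φ (v i) (v j) : ℝ) : ℂ) • actN (vecMat n (v i) * vecMat n (v j)) φ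
        else 0)
      = etaActionM r n Mr φ := by
  classical
  set G : (Fin n → Rn n) → Fin n → Fin n → TwSpinor r n :=
    fun w i j => ((etaM r n Mr φ (w i) (w j) : ℝ) : ℂ) • actN (vecMat n (w i) * vecMat n (w j)) φ
    with hG
  have hv_std : ∀ i j : Fin n,
      (inner ℝ (_root_.stdBasis n i) (_root_.stdBasis n j) : ℝ) = if i = j then 1 else 0 :=
    std_inner
  -- diagonal and symmetry
  have hdiag : ∀ (w : Fin n → Rn n) (i : Fin n), G w i i = 0 := by
    intro w i
    rw [hG]
    simp [etaM_self]
  have hsymm : ∀ (w : Fin n → Rn n),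
      (∀ i j, (inner ℝ (w i) (w j) : ℝ) = if i = j then 1 else 0) →
      ∀ i j : Fin n, i ≠ j → G w j i = G w i j := by
    intro w hw i j hij
    rw [hG]
    simp only
    rw [etaM_antisymm, vecMat_mul_antisymm hw hij, actN_negM, Complex.ofReal_neg, neg_smul,
      smul_neg, neg_neg]
  -- bilinear auxiliary maps
  have K_add_l : ∀ X Y Z : Rn n, actN (vecMat n (X + Y) * vecMat n Z) φ
      = actN (vecMat n X * vecMat n Z) φ + actN (vecMat n Y * vecMat n Z) φ := by
    intro X Y Z
    rw [vecMat_add, Matrix.add_mul, actN_addM]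
  have K_smul_l : ∀ (c : ℝ) (X Z : Rn n), actN (vecMat n (c • X) * vecMat n Z) φ
      = (c : ℂ) • actN (vecMat n X * vecMat n Z) φ := by
    intro c X Z
    rw [vecMat_smul, Matrix.smul_mul, actN_smulM]
  have K_add_r : ∀ X Y Z : Rn n, actN (vecMat n X * vecMat n (Y + Z)) φ
      = actN (vecMat n X * vecMat n Y) φ + actN (vecMat n X * vecMat n Z) φ := by
    intro X Y Z
    rw [vecMat_add, Matrix.mul_add, actN_addM]
  have K_smul_r : ∀ (c : ℝ) (X Z : Rn n), actN (vecMat n X * vecMat n (c • Z)) φ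
      = (c : ℂ) • actN (vecMat n X * vecMat n Z) φ := by
    intro c X Z
    rw [vecMat_smul, Matrix.mul_smul, actN_smulM]
  -- step A : full sums agree
  have fullA : ∑ i, ∑ j, G v i j = ∑ p, ∑ q, G (_root_.stdBasis n) p q := by
    set g1 : Rn n → Rn n → TwSpinor r n := fun Y W =>
      ∑ i, ((etaM r n Mr φ (v i) Y : ℝ) : ℂ) • actN (vecMat n (v i) * vecMat n W) φ with hg1
    have hg1a : ∀ X Y Z, g1 (X + Y) Z = g1 X Z + g1 Y Z := by
      intro X Y Z
      rw [hg1]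
      simp only
      rw [← Finset.sum_add_distrib]
      refine Finset.sum_congr rfl fun i _ => ?_
      rw [etaM_add_right, Complex.ofReal_add, add_smul]
    have hg1s : ∀ (c : ℝ) X Z, g1 (c • X) Z = c • g1 X Z := by
      intro c X Z
      rw [hg1]
      simp only
      rw [Finset.smul_sum]
      refine Finset.sum_congr rfl fun i _ => ?_
      rw [etaM_smul_right, Complex.ofReal_mul, mul_smul, rsmul_coe]
    have hg1a' : ∀ X Y Z, g1 X (Y + Z) = g1 X Y + g1 X Z := by
      intro X Y Z
      rw [hg1]
      simp only
      rw [← Finset.sum_add_distrib]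
      refine Finset.sum_congr rfl fun i _ => ?_
      rw [K_add_r, smul_add]
    have hg1s' : ∀ (c : ℝ) X Z, g1 X (c • Z) = c • g1 X Z := by
      intro c X Z
      rw [hg1]
      simp only
      rw [Finset.smul_sum]
      refine Finset.sum_congr rfl fun i _ => ?_
      rw [K_smul_r, smul_comm ((etaM r n Mr φ (v i) X : ℝ) : ℂ), rsmul_coe]
    have stepA1 : ∑ i, ∑ j, G v i j = ∑ q, g1 (_root_.stdBasis n q) (_root_.stdBasis n q) := by
      rw [Finset.sum_comm]
      have : ∀ j, (∑ i, G v i j) = g1 (v j) (v j) := fun j => rfl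
      rw [Finset.sum_congr rfl fun j _ => this j]
      exact trace_indep g1 hg1a hg1s hg1a' hg1s' v hv
    set g2 : Rn n → Rn n → TwSpinor r n := fun X Z =>
      ∑ q, ((etaM r n Mr φ X (_root_.stdBasis n q) : ℝ) : ℂ)
        • actN (vecMat n Z * vecMat n (_root_.stdBasis n q)) φ with hg2
    have hg2a : ∀ X Y Z, g2 (X + Y) Z = g2 X Z + g2 Y Z := by
      intro X Y Z
      rw [hg2]
      simp only
      rw [← Finset.sum_add_distrib]
      refine Finset.sum_congr rfl fun q _ => ?_
      rw [etaM_add_left, Complex.ofReal_add, add_smul]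
    have hg2s : ∀ (c : ℝ) X Z, g2 (c • X) Z = c • g2 X Z := by
      intro c X Z
      rw [hg2]
      simp only
      rw [Finset.smul_sum]
      refine Finset.sum_congr rfl fun q _ => ?_
      rw [etaM_smul_left, Complex.ofReal_mul, mul_smul, rsmul_coe]
    have hg2a' : ∀ X Y Z, g2 X (Y + Z) = g2 X Y + g2 X Z := by
      intro X Y Z
      rw [hg2]
      simp only
      rw [← Finset.sum_add_distrib]
      refine Finset.sum_congr rfl fun q _ => ?_
      rw [K_add_l, smul_add]
    have hg2s' : ∀ (c : ℝ) X Z, g2 X (c • Z) = c • g2 X Z := by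
      intro c X Z
      rw [hg2]
      simp only
      rw [Finset.smul_sum]
      refine Finset.sum_congr rfl fun q _ => ?_
      rw [K_smul_l, smul_comm ((etaM r n Mr φ X (_root_.stdBasis n q) : ℝ) : ℂ), rsmul_coe]
    have stepA2 : ∑ q, g1 (_root_.stdBasis n q) (_root_.stdBasis n q)
        = ∑ i, g2 (v i) (v i) := by
      rw [hg1, hg2]
      simp only
      rw [Finset.sum_comm]
    have stepA3 : ∑ i, g2 (v i) (v i) = ∑ p, g2 (_root_.stdBasis n p) (_root_.stdBasis n p) :=
      trace_indep g2 hg2a hg2s hg2a' hg2s' v hv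
    rw [stepA1, stepA2, stepA3]
  -- conclude
  have h2v := half_full (G v) (hdiag v) (hsymm v hv)
  have h2s := half_full (G (_root_.stdBasis n)) (hdiag _) (hsymm _ hv_std)
  have key : (2 : ℝ) • (∑ i, ∑ j, (if i < j then G v i j else 0))
      = (2 : ℝ) • (∑ i, ∑ j, (if i < j then G (_root_.stdBasis n) i j else 0)) := by
    rw [← h2v, ← h2s, fullA]
  have hcancel := smul_right_injective (TwSpinor r n) (two_ne_zero (α := ℝ)) key
  have final : etaActionM r n Mr φ
      = ∑ i, ∑ j, (if i < j then G (_root_.stdBasis n) i j else 0) := by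
    unfold etaActionM
    refine Finset.sum_congr rfl fun i _ => Finset.sum_congr rfl fun j _ => ?_
    by_cases h : i < j
    · rw [if_pos h, if_pos h, hG]
      simp only
      rw [vecMat_single, vecMat_single]
    · rw [if_neg h, if_neg h]
  rw [final, ← hcancel]

end FrameMain
-- ===== Chunk 8: conjugation helpers =====
section Conj

variable {r n : ℕ}

lemma sandwich {g A B : Matrix (SpIdx n) (SpIdx n) ℂ} (hgu' : g * gᴴ = 1) :
    (gᴴ * A * g) * (gᴴ * B * g) = gᴴ * (A * B) * g := by
  simp only [Matrix.mul_assoc]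
  rw [← Matrix.mul_assoc g gᴴ (B * g), hgu', Matrix.one_mul]

lemma conj_vec' {g : Matrix (SpIdx n) (SpIdx n) ℂ} (hgu : gᴴ * g = 1)
    {g₁ : Rn n →ₗ[ℝ] Rn n} (hg₁ : ∀ x : Rn n, g * vecMat n x = vecMat n (g₁ x) * g)
    (x : Rn n) : gᴴ * vecMat n (g₁ x) * g = vecMat n x := by
  rw [Matrix.mul_assoc, ← hg₁ x, ← Matrix.mul_assoc, hgu, Matrix.one_mul]

lemma g1_isometry {g : Matrix (SpIdx n) (SpIdx n) ℂ} (hgu : gᴴ * g = 1) (hgu' : g * gᴴ = 1)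
    {g₁ : Rn n →ₗ[ℝ] Rn n} (hg₁ : ∀ x : Rn n, g * vecMat n x = vecMat n (g₁ x) * g)
    (x y : Rn n) : (inner ℝ (g₁ x) (g₁ y) : ℝ) = inner ℝ x y := by
  have hc := vecMat_clifford (g₁ x) (g₁ y)
  have hconj : gᴴ * (vecMat n (g₁ x) * vecMat n (g₁ y) + vecMat n (g₁ y) * vecMat n (g₁ x)) * g
      = vecMat n x * vecMat n y + vecMat n y * vecMat n x := by
    rw [Matrix.mul_add, Matrix.add_mul]
    congr 1
    · rw [← sandwich hgu', conj_vec' hgu hg₁, conj_vec' hgu hg₁]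
    · rw [← sandwich hgu', conj_vec' hgu hg₁, conj_vec' hgu hg₁]
  rw [hc] at hconj
  rw [Matrix.mul_smul, Matrix.smul_mul, Matrix.mul_one, hgu, vecMat_clifford] at hconj
  have := smul_one_matrix_inj hconj
  have h2 : (-2 * (inner ℝ (g₁ x) (g₁ y) : ℝ) : ℝ) = -2 * (inner ℝ x y : ℝ) :=
    Complex.ofReal_inj.mp this
  linarith

lemma g1_injective {g : Matrix (SpIdx n) (SpIdx n) ℂ} (hgu : gᴴ * g = 1) (hgu' : g * gᴴ = 1)
    {g₁ : Rn n →ₗ[ℝ] Rn n} (hg₁ : ∀ x : Rn n, g * vecMat n x = vecMat n (g₁ x) * g) :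
    Function.Injective g₁ := by
  rw [← LinearMap.ker_eq_bot]
  rw [Submodule.eq_bot_iff]
  intro x hx
  have h1 : (inner ℝ (g₁ x) (g₁ x) : ℝ) = inner ℝ x x := g1_isometry hgu hgu' hg₁ x x
  rw [LinearMap.mem_ker] at hx
  rw [hx, inner_zero_left] at h1
  exact inner_self_eq_zero.mp h1.symm

lemma g1_bijective {g : Matrix (SpIdx n) (SpIdx n) ℂ} (hgu : gᴴ * g = 1) (hgu' : g * gᴴ = 1)
    {g₁ : Rn n →ₗ[ℝ] Rn n} (hg₁ : ∀ x : Rn n, g * vecMat n x = vecMat n (g₁ x) * g) :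
    Function.Bijective g₁ :=
  ⟨g1_injective hgu hgu' hg₁,
    (LinearMap.injective_iff_surjective).mp (g1_injective hgu hgu' hg₁)⟩

-- etaM linearity in the r-side matrix
lemma etaM_M_add (M N : Matrix (SpIdx r) (SpIdx r) ℂ) (φ : TwSpinor r n) (X Y : Rn n) :
    etaM r n (M + N) φ X Y = etaM r n M φ X Y + etaM r n N φ X Y := by
  unfold etaM
  rw [actR_addM, actN_phi_add, inner_add_left]
  simp

lemma etaM_M_smulr (c : ℝ) (M : Matrix (SpIdx r) (SpIdx r) ℂ) (φ : TwSpinor r n) (X Y : Rn n) :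
    etaM r n ((c : ℂ) • M) φ X Y = c * etaM r n M φ X Y := by
  unfold etaM
  rw [actR_smulM, actN_phi_smul, inner_smul_left, Complex.conj_ofReal, Complex.re_ofReal_mul]

lemma etaM_M_neg (M : Matrix (SpIdx r) (SpIdx r) ℂ) (φ : TwSpinor r n) (X Y : Rn n) :
    etaM r n (-M) φ X Y = -etaM r n M φ X Y := by
  have := etaM_M_smulr (-1 : ℝ) M φ X Y
  simpa using this

lemma etaActionM_M_add (M N : Matrix (SpIdx r) (SpIdx r) ℂ) (φ : TwSpinor r n) :
    etaActionM r n (M + N) φ = etaActionM r n M φ + etaActionM r n N φ := by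
  unfold etaActionM
  rw [← Finset.sum_add_distrib]
  refine Finset.sum_congr rfl fun i _ => ?_
  rw [← Finset.sum_add_distrib]
  refine Finset.sum_congr rfl fun j _ => ?_
  by_cases hij : i < j
  · rw [if_pos hij, if_pos hij, if_pos hij, etaM_M_add, Complex.ofReal_add, add_smul]
  · rw [if_neg hij, if_neg hij, if_neg hij, add_zero]

lemma etaActionM_M_smulr (c : ℝ) (M : Matrix (SpIdx r) (SpIdx r) ℂ) (φ : TwSpinor r n) :
    etaActionM r n ((c : ℂ) • M) φ = (c : ℂ) • etaActionM r n M φ := by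
  unfold etaActionM
  rw [Finset.smul_sum]
  refine Finset.sum_congr rfl fun i _ => ?_
  rw [Finset.smul_sum]
  refine Finset.sum_congr rfl fun j _ => ?_
  by_cases hij : i < j
  · rw [if_pos hij, if_pos hij, etaM_M_smulr, Complex.ofReal_mul, mul_smul]
  · rw [if_neg hij, if_neg hij, smul_zero]

lemma etaActionM_M_neg (M : Matrix (SpIdx r) (SpIdx r) ℂ) (φ : TwSpinor r n) :
    etaActionM r n (-M) φ = -etaActionM r n M φ := by
  have := etaActionM_M_smulr (-1 : ℝ) M φ
  simpa using this

-- all-pairs versions of the hpp data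
lemma f_orth_all {φ : TwSpinor r n} {V : Submodule ℝ (Rn n)} (hpp : IsPartiallyPure r n φ V)
    (a b : Fin r) (hab : a ≠ b) :
    (inner ℂ (actR (genMat r (a : ℕ) * genMat r (b : ℕ)) φ) φ : ℂ) = 0 := by
  rcases lt_trichotomy a b with h | h | h
  · exact hpp.f_orth a b h
  · exact absurd h hab
  · have hne : (a : ℕ) ≠ (b : ℕ) := fun hc => hab (Fin.ext hc)
    rw [genMat_anticomm (a.isLt) (b.isLt) hne, actR_negM, inner_neg_left, hpp.f_orth b a h,
      neg_zero]

lemma eta_plus_all {φ : TwSpinor r n} {V : Submodule ℝ (Rn n)} (hpp : IsPartiallyPure r n φ V)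
    (a b : Fin r) (hab : a ≠ b) :
    etaActionM r n (genMat r (a : ℕ) * genMat r (b : ℕ)) φ
      = -(actR (genMat r (a : ℕ) * genMat r (b : ℕ)) φ) := by
  rcases lt_trichotomy a b with h | h | h
  · exact eq_neg_of_add_eq_zero_left (hpp.eta_plus a b h)
  · exact absurd h hab
  · have hne : (a : ℕ) ≠ (b : ℕ) := fun hc => hab (Fin.ext hc)
    have hba := eq_neg_of_add_eq_zero_left (hpp.eta_plus b a h)
    rw [genMat_anticomm (a.isLt) (b.isLt) hne, etaActionM_M_neg, actR_negM, hba, neg_neg]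

end Conj
-- extra action lemmas
section Actions2
variable {r n : ℕ}

lemma actR_phi_add (M : Matrix (SpIdx r) (SpIdx r) ℂ) (φ ψ : TwSpinor r n) :
    actR M (φ + ψ) = actR M φ + actR M ψ := by
  ext p
  simp [actR, mul_add, Finset.sum_add_distrib]

lemma actR_phi_sum {ι : Type*} (s : Finset ι) (M : Matrix (SpIdx r) (SpIdx r) ℂ)
    (f : ι → TwSpinor r n) : actR M (∑ i ∈ s, f i) = ∑ i ∈ s, actR M (f i) := by
  classical
  induction s using Finset.induction_on with
  | empty => ext p; simp [actR]
  | insert _ _ h ih => rw [Finset.sum_insert h, Finset.sum_insert h, actR_phi_add, ih]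

lemma actN_phi_zero (M : Matrix (SpIdx n) (SpIdx n) ℂ) :
    actN M (0 : TwSpinor r n) = 0 := by
  have := actN_phi_smul M (0 : ℂ) (0 : TwSpinor r n)
  simpa using this

lemma actR_phi_zero (M : Matrix (SpIdx r) (SpIdx r) ℂ) :
    actR M (0 : TwSpinor r n) = 0 := by
  have := actR_phi_smul M (0 : ℂ) (0 : TwSpinor r n)
  simpa using this

lemma etaActionM_M_zero (φ : TwSpinor r n) :
    etaActionM r n (0 : Matrix (SpIdx r) (SpIdx r) ℂ) φ = 0 := by
  have := etaActionM_M_smulr 0 (0 : Matrix (SpIdx r) (SpIdx r) ℂ) φ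
  simpa using this

lemma etaActionM_M_sum {ι : Type*} (s : Finset ι) (f : ι → Matrix (SpIdx r) (SpIdx r) ℂ)
    (φ : TwSpinor r n) :
    etaActionM r n (∑ i ∈ s, f i) φ = ∑ i ∈ s, etaActionM r n (f i) φ := by
  classical
  induction s using Finset.induction_on with
  | empty => simpa using etaActionM_M_zero φ
  | insert _ _ h ih => rw [Finset.sum_insert h, Finset.sum_insert h, etaActionM_M_add, ih]

end Actions2
/-- the action of Spin^{c,r}(n) preserves partially pure spinors;
moreover V^{u·φ} = g₁(V^φ) and J^{u·φ} = g₁ ∘ J^φ ∘ g₁⁻¹.  Here u = z·(h ⊗ g) with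
g ∈ Spin(n), h ∈ Spin(r), |z| = 1, and g₁ = λ_n(g) is characterized by the intertwining
relation g·κ(x) = κ(g₁ x)·g. -/
theorem stmt14 (n r : ℕ) (hr : 2 ≤ r) (φ : TwSpinor r n) (V : Submodule ℝ (Rn n))
    (hpp : IsPartiallyPure r n φ V) (J : Rn n → Rn n) (hJ : IsJ r n φ V J)
    (g : Matrix (SpIdx n) (SpIdx n) ℂ) (h : Matrix (SpIdx r) (SpIdx r) ℂ) (z : ℂ)
    (hg : g ∈ SpinMat n) (hh : h ∈ SpinMat r) (hz : ‖z‖ = 1)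
    (g₁ : Rn n →ₗ[ℝ] Rn n)
    (hg₁ : ∀ x : Rn n, g * vecMat n x = vecMat n (g₁ x) * g) :
    IsPartiallyPure r n (twAct (z • kronOp h g) φ) (V.map g₁) ∧
    ∀ X ∈ V,
      actN (vecMat n (g₁ X)) (twAct (z • kronOp h g) φ)
        = I • actN (vecMat n (g₁ (J X))) (twAct (z • kronOp h g) φ) := by
  classical
  have hgu := spinMat_unitary hg
  have hgu' := spinMat_unitary' hg
  have hhu := spinMat_unitary hh
  have hhu' := spinMat_unitary' hh
  have hz1 : (starRingEnd ℂ) z * z = 1 := by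
    rw [mul_comm, Complex.mul_conj, Complex.normSq_eq_norm_sq, hz]
    norm_num
  set U := z • kronOp h g with hU
  have hUct : Uᴴ = (starRingEnd ℂ) z • kronOp hᴴ gᴴ := by
    rw [hU, Matrix.conjTranspose_smul, kronOp_ct]
    rfl
  have hUU : Uᴴ * U = 1 := by
    rw [hUct, hU, Matrix.smul_mul, Matrix.mul_smul, smul_smul, hz1, kronOp_mul, hhu, hgu,
      kronOp_one, one_smul]
  set ψ := twAct U φ with hψdef
  have hψ : ψ = z • actR h (actN g φ) := by
    rw [hψdef, hU, twAct_smul, twAct_kron]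
  -- general conjugation of inner ℝ products
  have hconjU : ∀ (M : Matrix (SpIdx r) (SpIdx r) ℂ) (W : Matrix (SpIdx n) (SpIdx n) ℂ),
      Uᴴ * (kronOp M W * U) = kronOp (hᴴ * M * h) (gᴴ * W * g) := by
    intro M W
    rw [hU, hUct, Matrix.mul_smul, Matrix.smul_mul, Matrix.mul_smul, smul_smul, hz1, one_smul,
      kronOp_mul, kronOp_mul, ← Matrix.mul_assoc hᴴ M h, ← Matrix.mul_assoc gᴴ W g]
  have tool : ∀ (W : Matrix (SpIdx n) (SpIdx n) ℂ) (M : Matrix (SpIdx r) (SpIdx r) ℂ),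
      (inner ℂ (actN W (actR M ψ)) ψ : ℂ)
        = inner ℂ (actN (gᴴ * W * g) (actR (hᴴ * M * h) φ)) φ := by
    intro W M
    have hA : actN W (actR M ψ) = twAct (kronOp M W * U) φ := by
      rw [twAct_mul, twAct_kron, actN_actR_comm, hψdef]
    have hBu : (Uᴴ)ᴴ * Uᴴ = 1 := by
      rw [Matrix.conjTranspose_conjTranspose]
      exact mul_eq_one_comm.mp hUU
    have key := twAct_unitary_inner hBu (twAct (kronOp M W * U) φ) (twAct U φ)
    rw [← twAct_mul, ← twAct_mul, hconjU, hUU, twAct_one] at key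
    rw [hA, hψdef, ← key, twAct_kron, actN_actR_comm]
  have toolR : ∀ M : Matrix (SpIdx r) (SpIdx r) ℂ,
      (inner ℂ (actR M ψ) ψ : ℂ) = inner ℂ (actR (hᴴ * M * h) φ) φ := by
    intro M
    have h1 := tool 1 M
    rwa [actN_one, Matrix.mul_one, hgu, actN_one] at h1
  -- the rotation σ on the r-side
  obtain ⟨Lh, hLlen, hLunit, hhL⟩ := id hh
  obtain ⟨σ, hσiso, hσcj⟩ := spin_conj_exists Lh hLunit
  rw [← hhL] at hσcj
  have hconj_h : ∀ y : Rn r, hᴴ * vecMat r y * h = vecMat r (σ y) := by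
    intro y
    rw [Matrix.mul_assoc, hσcj y, ← Matrix.mul_assoc, hhu, Matrix.one_mul]
  have hFconj : ∀ k l : Fin r, hᴴ * (genMat r (k : ℕ) * genMat r (l : ℕ)) * h
      = vecMat r (σ (_root_.stdBasis r k)) * vecMat r (σ (_root_.stdBasis r l)) := by
    intro k l
    rw [← sandwich hhu', ← vecMat_single k, ← vecMat_single l, hconj_h, hconj_h]
  have hsig : ∀ k l : Fin r, k ≠ l →
      (∑ t : Fin r, σ (_root_.stdBasis r k) t * σ (_root_.stdBasis r l) t) = 0 := by
    intro k l hkl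
    rw [← rn_inner, hσiso, std_inner, if_neg hkl]
  -- the equivalence e on the n-side
  have hbij := g1_bijective hgu hgu' hg₁
  set e := LinearEquiv.ofBijective g₁ hbij with he
  have hesymm : ∀ y : Rn n, g₁ (e.symm y) = y := by
    intro y
    have := e.apply_symm_apply y
    rwa [he, LinearEquiv.ofBijective_apply] at this
  have hconj_g : ∀ y : Rn n, gᴴ * vecMat n y * g = vecMat n (e.symm y) := by
    intro y
    have h1 := conj_vec' hgu hg₁ (e.symm y)
    rwa [hesymm] at h1
  have hiso_symm : ∀ u w : Rn n, (inner ℝ (e.symm u) (e.symm w) : ℝ) = inner ℝ u w := by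
    intro u w
    have h1 := g1_isometry hgu hgu' hg₁ (e.symm u) (e.symm w)
    rw [hesymm, hesymm] at h1
    exact h1.symm
  have ha_on : ∀ i j : Fin n, (inner ℝ (e.symm (_root_.stdBasis n i)) (e.symm (_root_.stdBasis n j)) : ℝ)
      = if i = j then 1 else 0 := by
    intro i j
    rw [hiso_symm, std_inner]
  -- wedge conjugation
  have hwconj : ∀ X Y : Rn n, gᴴ * wedgeMat n X Y * g = wedgeMat n (e.symm X) (e.symm Y) := by
    intro X Y
    rw [wedgeMat, wedgeMat, Matrix.mul_add, Matrix.add_mul, ← sandwich hgu', hconj_g, hconj_g]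
    congr 1
    rw [Matrix.mul_smul, Matrix.smul_mul, Matrix.mul_one, hgu, hiso_symm]
  -- how actN acts on ψ
  have hactN : ∀ W : Matrix (SpIdx n) (SpIdx n) ℂ,
      actN W ψ = z • actR h (actN g (actN (gᴴ * W * g) φ)) := by
    intro W
    have hWg : W * g = g * (gᴴ * W * g) := by
      rw [← Matrix.mul_assoc g (gᴴ * W) g, ← Matrix.mul_assoc g gᴴ W, hgu', Matrix.one_mul]
    rw [hψ, actN_phi_smul, actN_actR_comm, actN_mulM, hWg, ← actN_mulM]
  have key_vec : ∀ x : Rn n,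
      actN (vecMat n (g₁ x)) ψ = z • actR h (actN g (actN (vecMat n x) φ)) := by
    intro x
    rw [hactN, conj_vec' hgu hg₁]
  have conj_pair : ∀ x y : Rn n, actN (vecMat n x) φ = I • actN (vecMat n y) φ →
      actN (vecMat n (g₁ x)) ψ = I • actN (vecMat n (g₁ y)) ψ := by
    intro x y hxy
    rw [key_vec, key_vec, hxy, actN_phi_smul, actR_phi_smul, smul_comm z I]
  -- eta conjugation
  have heta : ∀ (M : Matrix (SpIdx r) (SpIdx r) ℂ) (X Y : Rn n),
      etaM r n M ψ X Y = etaM r n (hᴴ * M * h) φ (e.symm X) (e.symm Y) := by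
    intro M X Y
    unfold etaM
    rw [tool (wedgeMat n X Y) M, hwconj]
  refine ⟨⟨hpp.lt_dim, ?_, ?_, ?_, ?_, ?_, ?_, ?_⟩, ?_⟩
  · -- mem_sigma
    by_cases hro : r % 2 = 1
    · exact Or.inl hro
    · right
      have hre : r % 2 = 0 := by omega
      have hvol := hpp.mem_sigma.resolve_left hro
      have hcomm := vol_comm_spin hre hh
      rw [hψ, actR_phi_smul, actR_mulM, Matrix.smul_mul, hcomm, ← Matrix.mul_smul,
        ← actR_mulM, ← actN_actR_comm, hvol]
  · -- unit_norm
    rw [hψdef, twAct_unitary_norm hUU]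
    exact hpp.unit_norm
  · -- dim_eq
    have hcoe : (e : Rn n →ₗ[ℝ] Rn n) = g₁ := by rw [he]; rfl
    rw [← hcoe, LinearEquiv.finrank_map_eq]
    exact hpp.dim_eq
  · -- exists_conj
    intro X' hX'
    rw [Submodule.mem_map] at hX'
    obtain ⟨X, hXV, rfl⟩ := hX'
    obtain ⟨Y, hYV, hXY⟩ := hpp.exists_conj X hXV
    exact ⟨g₁ Y, Submodule.mem_map_of_mem hYV, conj_pair X Y hXY⟩
  · -- eta_plus
    intro k l hkl
    set F := genMat r (k : ℕ) * genMat r (l : ℕ) with hF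
    have Tsmul : ∀ (c : ℂ) (χ : TwSpinor r n),
        z • actR h (actN g (c • χ)) = c • (z • actR h (actN g χ)) := by
      intro c χ
      rw [actN_phi_smul, actR_phi_smul, smul_comm z c]
    have Tsum : ∀ (f : Fin n → TwSpinor r n),
        z • actR h (actN g (∑ i, f i)) = ∑ i, z • actR h (actN g (f i)) := by
      intro f
      rw [actN_phi_sum, actR_phi_sum, Finset.smul_sum]
    have Tzero : z • actR h (actN g (0 : TwSpinor r n)) = 0 := by
      rw [actN_phi_zero, actR_phi_zero, smul_zero]
    have hop : ∀ i j : Fin n, actN (genMat n (i : ℕ) * genMat n (j : ℕ)) ψ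
        = z • actR h (actN g (actN (vecMat n (e.symm (_root_.stdBasis n i))
            * vecMat n (e.symm (_root_.stdBasis n j))) φ)) := by
      intro i j
      rw [hactN, ← sandwich hgu', ← vecMat_single i, ← vecMat_single j, hconj_g, hconj_g]
    have stepA : etaActionM r n F ψ
        = z • actR h (actN g (∑ i : Fin n, ∑ j : Fin n, if i < j
            then ((etaM r n (hᴴ * F * h) φ (e.symm (_root_.stdBasis n i))
                (e.symm (_root_.stdBasis n j)) : ℝ) : ℂ)
              • actN (vecMat n (e.symm (_root_.stdBasis n i))
                  * vecMat n (e.symm (_root_.stdBasis n j))) φ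
            else 0)) := by
      unfold etaActionM
      refine Eq.trans ?_ (Tsum _).symm
      refine Finset.sum_congr rfl fun i _ => ?_
      refine Eq.trans ?_ (Tsum _).symm
      refine Finset.sum_congr rfl fun j _ => ?_
      by_cases hij : i < j
      · rw [if_pos hij, if_pos hij, heta F, hop i j, Tsmul]
      · rw [if_neg hij, if_neg hij, Tzero]
    have hframe : (∑ i : Fin n, ∑ j : Fin n, if i < j
        then ((etaM r n (hᴴ * F * h) φ (e.symm (_root_.stdBasis n i))
            (e.symm (_root_.stdBasis n j)) : ℝ) : ℂ)
          • actN (vecMat n (e.symm (_root_.stdBasis n i))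
              * vecMat n (e.symm (_root_.stdBasis n j))) φ
        else 0) = etaActionM r n (hᴴ * F * h) φ :=
      etaAction_frame (hᴴ * F * h) φ (fun i => e.symm (_root_.stdBasis n i)) ha_on
    have hM'v : hᴴ * F * h = vecMat r (σ (_root_.stdBasis r k)) * vecMat r (σ (_root_.stdBasis r l)) := by
      rw [hF]
      exact hFconj k l
    have step2 : etaActionM r n (hᴴ * F * h) φ = -(actR (hᴴ * F * h) φ) := by
      have hexpand : hᴴ * F * h = ∑ a : Fin r, ∑ b : Fin r,
          ((σ (_root_.stdBasis r k) a * σ (_root_.stdBasis r l) b : ℝ) : ℂ)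
            • (genMat r (a : ℕ) * genMat r (b : ℕ)) := by
        rw [hM'v, vecMat_mul_expand]
      have key2 : ∀ a b : Fin r,
          ((σ (_root_.stdBasis r k) a * σ (_root_.stdBasis r l) b : ℝ) : ℂ)
              • etaActionM r n (genMat r (a : ℕ) * genMat r (b : ℕ)) φ
            = -(((σ (_root_.stdBasis r k) a * σ (_root_.stdBasis r l) b : ℝ) : ℂ)
                • actR (genMat r (a : ℕ) * genMat r (b : ℕ)) φ)
              + (if a = b
                  then ((σ (_root_.stdBasis r k) a * σ (_root_.stdBasis r l) b : ℝ) : ℂ)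
                    • (etaActionM r n (-1) φ + actR (-1 : Matrix (SpIdx r) (SpIdx r) ℂ) φ)
                  else 0) := by
        intro a b
        by_cases hab : a = b
        · subst hab
          rw [if_pos rfl, genMat_sq a.isLt, smul_add]
          abel
        · rw [if_neg hab, eta_plus_all hpp a b hab, add_zero, smul_neg]
      have lhs_eq : etaActionM r n (hᴴ * F * h) φ
          = ∑ a : Fin r, ∑ b : Fin r,
              ((σ (_root_.stdBasis r k) a * σ (_root_.stdBasis r l) b : ℝ) : ℂ)
                • etaActionM r n (genMat r (a : ℕ) * genMat r (b : ℕ)) φ := by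
        conv_lhs => rw [hexpand]
        rw [etaActionM_M_sum]
        refine Finset.sum_congr rfl fun a _ => ?_
        rw [etaActionM_M_sum]
        exact Finset.sum_congr rfl fun b _ => etaActionM_M_smulr _ _ φ
      have rhs_eq : actR (hᴴ * F * h) φ
          = ∑ a : Fin r, ∑ b : Fin r,
              ((σ (_root_.stdBasis r k) a * σ (_root_.stdBasis r l) b : ℝ) : ℂ)
                • actR (genMat r (a : ℕ) * genMat r (b : ℕ)) φ := by
        conv_lhs => rw [hexpand]
        rw [actR_sumM]
        refine Finset.sum_congr rfl fun a _ => ?_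
        rw [actR_sumM]
        exact Finset.sum_congr rfl fun b _ => actR_smulM _ _ φ
      have hdiagsum : (∑ a : Fin r, ∑ b : Fin r, (if a = b
          then ((σ (_root_.stdBasis r k) a * σ (_root_.stdBasis r l) b : ℝ) : ℂ)
            • (etaActionM r n (-1) φ + actR (-1 : Matrix (SpIdx r) (SpIdx r) ℂ) φ)
          else 0)) = 0 := by
        rw [Finset.sum_congr rfl (fun a _ => Finset.sum_eq_single a
          (fun b _ hba => if_neg (Ne.symm hba))
          (fun hmem => absurd (Finset.mem_univ a) hmem))]
        rw [Finset.sum_congr rfl (fun a _ => if_pos rfl)]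
        rw [← Finset.sum_smul]
        have h0 : (∑ a : Fin r,
            ((σ (_root_.stdBasis r k) a * σ (_root_.stdBasis r l) a : ℝ) : ℂ)) = 0 := by
          exact_mod_cast hsig k l (ne_of_lt hkl)
        rw [h0, zero_smul]
      rw [lhs_eq, rhs_eq]
      rw [Finset.sum_congr rfl (fun a _ => Finset.sum_congr rfl (fun b _ => key2 a b))]
      rw [Finset.sum_congr rfl (fun a _ => Finset.sum_add_distrib), Finset.sum_add_distrib,
        hdiagsum, add_zero]
      rw [Finset.sum_congr rfl (fun a _ => Finset.sum_neg_distrib _), Finset.sum_neg_distrib]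
    rw [stepA, hframe, step2]
    have hcommF : h * (hᴴ * F * h) = F * h := by
      rw [← Matrix.mul_assoc h (hᴴ * F) h, ← Matrix.mul_assoc h hᴴ F, hhu', Matrix.one_mul]
    have hRF : actR F ψ = z • actR h (actN g (actR (hᴴ * F * h) φ)) := by
      rw [hψ, actR_phi_smul, actR_mulM, ← hcommF, ← actR_mulM, ← actN_actR_comm]
    rw [hRF, actN_phi_neg, actR_phi_neg, smul_neg, neg_add_cancel]
  · -- f_orth
    intro k l hkl
    rw [toolR, hFconj k l]
    have hinner_aa : ∀ t : Fin r,
        (inner ℂ (actR (genMat r (t : ℕ) * genMat r (t : ℕ)) φ) φ : ℂ) = -(inner ℂ φ φ : ℂ) := by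
      intro t
      rw [genMat_sq t.isLt]
      rw [show (-1 : Matrix (SpIdx r) (SpIdx r) ℂ) = -(1 : Matrix (SpIdx r) (SpIdx r) ℂ) from rfl,
        actR_negM, actR_one, inner_neg_left]
    have expand : (inner ℂ (actR (vecMat r (σ (_root_.stdBasis r k)) * vecMat r (σ (_root_.stdBasis r l))) φ) φ : ℂ)
        = ∑ a : Fin r, ∑ b : Fin r,
            ((σ (_root_.stdBasis r k) a * σ (_root_.stdBasis r l) b : ℝ) : ℂ)
              * (inner ℂ (actR (genMat r (a : ℕ) * genMat r (b : ℕ)) φ) φ : ℂ) := by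
      rw [vecMat_mul_expand, actR_sumM, sum_inner]
      refine Finset.sum_congr rfl fun a _ => ?_
      rw [actR_sumM, sum_inner]
      refine Finset.sum_congr rfl fun b _ => ?_
      rw [actR_smulM, inner_smul_left, Complex.conj_ofReal]
    rw [expand]
    rw [Finset.sum_congr rfl (fun a _ => Finset.sum_eq_single a
      (fun b _ hba => by rw [f_orth_all hpp a b (Ne.symm hba), mul_zero])
      (fun hmem => absurd (Finset.mem_univ a) hmem))]
    rw [Finset.sum_congr rfl (fun a _ => by rw [hinner_aa a])]
    rw [← Finset.sum_mul]
    have h0 : (∑ a : Fin r, ((σ (_root_.stdBasis r k) a * σ (_root_.stdBasis r l) a : ℝ) : ℂ)) = 0 := by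
      have := hsig k l (ne_of_lt hkl)
      exact_mod_cast congrArg (fun t : ℝ => (t : ℂ)) this
    rw [h0, zero_mul]
  · -- vol_orth
    intro hr4
    subst hr4
    rw [toolR]
    have hcomm := vol_comm_spin (by norm_num) hh
    rw [Matrix.mul_assoc, hcomm, ← Matrix.mul_assoc, hhu, Matrix.one_mul]
    exact hpp.vol_orth rfl
  · -- the J part
    intro X hX
    exact conj_pair X (J X) (hJ.2 X hX)
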